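/- arXiv:1304.2762 — 6 statements merged into one kernel-verified Lean document; each statement's English description precedes it below -/
import Mathlib

section
/- Let f be differentiable on an open interval containing [a,b] with a < b and f' integrable on [a,b]. Then f((a+b)/2) - (1/(b-a))∫_a^b f(x) dx = ((b-a)/4) ∫_0^1 (1-t) [ f'(ta + (1-t)(a+b)/2) - f'(tb + (1-t)(a+b)/2) ] dt. -/
open Set MeasureTheory intervalIntegral

lemma key_int (f : ℝ → ℝ) (m c : ℝ) (hmc : c - m ≠ 0)
    (hint : IntervalIntegrable (deriv f) volume m c) :
    IntervalIntegrable (fun t => deriv f (m + t * (c - m))) volume 0 1 := by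
  have h2 := (hint.comp_add_left m).comp_mul_right (c := c - m)
  simpa [hmc] using h2

lemma key (f : ℝ → ℝ) (I : Set ℝ) (hI : IsOpen I) (hf : DifferentiableOn ℝ f I)
    (m c : ℝ) (hmc : c - m ≠ 0) (hsub : uIcc m c ⊆ I)
    (hint : IntervalIntegrable (deriv f) volume m c) :
    ∫ t in (0:ℝ)..1, (1 - t) * deriv f (m + t * (c - m)) =
      -(f m) / (c - m) + (1 / (c - m) ^ 2) * ∫ x in m..c, f x := by
  have hmem : ∀ t ∈ uIcc (0:ℝ) 1, m + t * (c - m) ∈ uIcc m c := by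
    intro t ht
    rw [uIcc_of_le (by norm_num : (0:ℝ) ≤ 1)] at ht
    rcases le_or_gt m c with h | h
    · rw [uIcc_of_le h]
      constructor <;> nlinarith [ht.1, ht.2, sub_nonneg.mpr h]
    · rw [uIcc_of_ge h.le]
      constructor <;> nlinarith [ht.1, ht.2]
  have hderiv : ∀ x ∈ uIcc m c, HasDerivAt f (deriv f x) x := fun x hx =>
    ((hf x (hsub hx)).differentiableAt (hI.mem_nhds (hsub hx))).hasDerivAt
  have hu : ∀ t ∈ uIcc (0:ℝ) 1, HasDerivAt (fun t : ℝ => 1 - t) ((fun _ : ℝ => (-1:ℝ)) t) t := by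
    intro t ht
    simpa using (hasDerivAt_id t).const_sub (1:ℝ)
  have hinner : ∀ t : ℝ, HasDerivAt (fun t : ℝ => m + t * (c - m)) (c - m) t := by
    intro t
    simpa using ((hasDerivAt_id t).mul_const (c - m)).const_add m
  have hv : ∀ t ∈ uIcc (0:ℝ) 1,
      HasDerivAt (fun t : ℝ => f (m + t * (c - m)) / (c - m))
        (deriv f (m + t * (c - m))) t := by
    intro t ht
    have := ((hderiv _ (hmem t ht)).comp t (hinner t)).div_const (c - m)
    rw [mul_div_assoc, div_self hmc, mul_one] at this
    exact this
  have hu' : IntervalIntegrable (fun _ : ℝ => (-1:ℝ)) volume 0 1 :=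
    intervalIntegrable_const
  have hv' := key_int f m c hmc hint
  have ibp := integral_mul_deriv_eq_deriv_mul hu hv hu' hv'
  rw [ibp]
  have hsubst : ∫ t in (0:ℝ)..1, f (m + t * (c - m)) =
      (c - m)⁻¹ * ∫ x in m..c, f x := by
    have := integral_comp_mul_add (a := 0) (b := 1) f hmc m
    simp only [smul_eq_mul] at this
    have e : ∀ t : ℝ, m + t * (c - m) = (c - m) * t + m := fun t => by ring
    simp only [e]
    rw [this]
    norm_num
  have : ∫ t in (0:ℝ)..1, (fun _ : ℝ => (-1:ℝ)) t * (f (m + t * (c - m)) / (c - m)) =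
      -((c - m)⁻¹ * ((c - m)⁻¹ * ∫ x in m..c, f x)) := by
    simp only [neg_mul, one_mul, ← neg_div]
    rw [intervalIntegral.integral_div]
    rw [intervalIntegral.integral_neg, hsubst]
    field_simp
  rw [this]
  have h0 : m + (0:ℝ) * (c - m) = m := by ring
  rw [h0]
  field_simp
  ring

set_option maxHeartbeats 2000000 in
theorem midpoint_identity
    (f : ℝ → ℝ) (a b : ℝ) (I : Set ℝ) (hI : IsOpen I) (hIcc : Icc a b ⊆ I)
    (hab : a < b)
    (hf : DifferentiableOn ℝ f I)
    (hint : IntervalIntegrable (deriv f) volume a b) :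
    f ((a + b) / 2) - (1 / (b - a)) * ∫ x in a..b, f x =
      ((b - a) / 4) *
        ∫ t in (0:ℝ)..1, (1 - t) *
          (deriv f (t * a + (1 - t) * ((a + b) / 2)) -
            deriv f (t * b + (1 - t) * ((a + b) / 2))) := by
  set m : ℝ := (a + b) / 2 with hm
  clear_value m
  have hba : b - a ≠ 0 := sub_ne_zero.mpr hab.ne'
  have ham : a - m ≠ 0 := by rw [hm]; intro h; apply hba; linarith [sub_eq_zero.mp h]
  have hbm : b - m ≠ 0 := by rw [hm]; intro h; apply hba; linarith [sub_eq_zero.mp h]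
  have huIcc : uIcc a b = Icc a b := uIcc_of_le hab.le
  have hma : uIcc m a ⊆ Icc a b := by
    rw [uIcc_of_ge (by rw [hm]; linarith : a ≤ m)]
    exact Icc_subset_Icc le_rfl (by rw [hm]; linarith)
  have hmb : uIcc m b ⊆ Icc a b := by
    rw [uIcc_of_le (by rw [hm]; linarith : m ≤ b)]
    exact Icc_subset_Icc (by rw [hm]; linarith) le_rfl
  have hinta : IntervalIntegrable (deriv f) volume m a :=
    hint.mono_set (huIcc ▸ hma)
  have hintb : IntervalIntegrable (deriv f) volume m b :=
    hint.mono_set (huIcc ▸ hmb)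
  have K1 := key f I hI hf m a ham (fun x hx => hIcc (hma hx)) hinta
  have K2 := key f I hI hf m b hbm (fun x hx => hIcc (hmb hx)) hintb
  have e1 : ∀ t : ℝ, t * a + (1 - t) * m = m + t * (a - m) := fun t => by ring
  have e2 : ∀ t : ℝ, t * b + (1 - t) * m = m + t * (b - m) := fun t => by ring
  have int1 : IntervalIntegrable (fun t : ℝ => (1 - t) * deriv f (m + t * (a - m))) volume 0 1 :=
    (key_int f m a ham hinta).continuousOn_mul
      ((continuous_const.sub continuous_id).continuousOn)
  have int2 : IntervalIntegrable (fun t : ℝ => (1 - t) * deriv f (m + t * (b - m))) volume 0 1 :=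
    (key_int f m b hbm hintb).continuousOn_mul
      ((continuous_const.sub continuous_id).continuousOn)
  have hsplit : ∫ t in (0:ℝ)..1, (1 - t) *
      (deriv f (t * a + (1 - t) * m) - deriv f (t * b + (1 - t) * m)) =
      (∫ t in (0:ℝ)..1, (1 - t) * deriv f (m + t * (a - m))) -
      ∫ t in (0:ℝ)..1, (1 - t) * deriv f (m + t * (b - m)) := by
    rw [← intervalIntegral.integral_sub int1 int2]
    apply intervalIntegral.integral_congr
    intro t ht
    simp only [e1, e2]
    ring
  rw [hsplit, K1, K2]
  have hfc : ∀ u v : ℝ, uIcc u v ⊆ Icc a b → IntervalIntegrable f volume u v := by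
    intro u v h
    exact (hf.continuousOn.mono (fun x hx => hIcc (h hx))).intervalIntegrable
  have ham3 : uIcc a m ⊆ Icc a b := by
    rw [uIcc_of_le (show a ≤ m by rw [hm]; linarith)]
    exact Icc_subset_Icc le_rfl (by rw [hm]; linarith)
  have hadj : (∫ x in a..m, f x) + ∫ x in m..b, f x = ∫ x in a..b, f x :=
    intervalIntegral.integral_add_adjacent_intervals (hfc a m ham3) (hfc m b hmb)
  have hrev : ∫ x in m..a, f x = -∫ x in a..m, f x :=
    intervalIntegral.integral_symm a m
  rw [hrev, ← hadj]
  have hma2 : a - m = -((b - a) / 2) := by rw [hm]; ring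
  have hmb2 : b - m = (b - a) / 2 := by rw [hm]; ring
  rw [hma2, hmb2]
  generalize (∫ x in a..m, f x) = A
  generalize (∫ x in m..b, f x) = B
  have halg : ∀ F A B d : ℝ, d ≠ 0 →
      F - 1 / d * (A + B) =
        d / 4 * (-F / -(d / 2) + 1 / (-(d / 2)) ^ 2 * -A - (-F / (d / 2) + 1 / (d / 2) ^ 2 * B)) := by
    intro F A B d hd
    field_simp
    ring
  exact halg (f m) A B (b - a) hba
end

section
/- For p > 1 and 0 < a < b, |G(a,b) - L(a,b)| ≤ ((ln b - ln a)/(4(p+1)^{1/p})) [ A(a,b) + G(a,b) ], where G(a,b) = √(ab) is the geometric mean, A(a,b) = (a+b)/2 is the arithmetic mean, and L(a,b) = (b-a)/(ln b - ln a) is the logarithmic mean. -/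
open Real

private lemma hd0 (x : ℝ) : HasDerivAt (fun x : ℝ => x * Real.cosh x - Real.sinh x)
    (x * Real.sinh x) x := by
  have := ((hasDerivAt_id x).mul (Real.hasDerivAt_cosh x)).sub (Real.hasDerivAt_sinh x)
  refine this.congr_deriv ?_
  simp only [id_eq]
  ring

private lemma hd1 (x : ℝ) : HasDerivAt
    (fun x : ℝ => x/2 * (Real.cosh x + 1) + x^2/4 * Real.sinh x - Real.cosh x + 1)
    ((Real.cosh x + 1)/2 + x * Real.sinh x + x^2/4 * Real.cosh x - Real.sinh x) x := by
  have h1 : HasDerivAt (fun x : ℝ => x/2) (1/2) x := (hasDerivAt_id x).div_const 2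
  have h2 : HasDerivAt (fun x : ℝ => Real.cosh x + 1) (Real.sinh x) x :=
    (Real.hasDerivAt_cosh x).add_const 1
  have h3 : HasDerivAt (fun x : ℝ => x^2/4) (2*x/4) x := by
    simpa using (hasDerivAt_pow 2 x).div_const 4
  have := (((h1.mul h2).add (h3.mul (Real.hasDerivAt_sinh x))).sub
    (Real.hasDerivAt_cosh x)).add_const 1
  refine this.congr_deriv ?_; ring

private lemma hd2 (x : ℝ) : HasDerivAt
    (fun x : ℝ => x^2/4 * (Real.cosh x + 1) - Real.sinh x + x)
    (x/2 * (Real.cosh x + 1) + x^2/4 * Real.sinh x - Real.cosh x + 1) x := by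
  have h2 : HasDerivAt (fun x : ℝ => Real.cosh x + 1) (Real.sinh x) x :=
    (Real.hasDerivAt_cosh x).add_const 1
  have h3 : HasDerivAt (fun x : ℝ => x^2/4) (2*x/4) x := by
    simpa using (hasDerivAt_pow 2 x).div_const 4
  have := ((h3.mul h2).sub (Real.hasDerivAt_sinh x)).add (hasDerivAt_id x)
  refine this.congr_deriv ?_; ring

private lemma mono_aux {f f' : ℝ → ℝ} (hd : ∀ x, HasDerivAt f (f' x) x)
    (hf' : ∀ x, 0 < x → 0 ≤ f' x) : MonotoneOn f (Set.Ici 0) := by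
  apply monotoneOn_of_deriv_nonneg (convex_Ici 0)
  · exact (Differentiable.continuous (fun x => (hd x).differentiableAt)).continuousOn
  · exact fun x _ => (hd x).differentiableAt.differentiableWithinAt
  · intro x hx
    rw [interior_Ici] at hx
    rw [(hd x).deriv]
    exact hf' x hx

lemma sinh_le_mul_cosh {u : ℝ} (hu : 0 ≤ u) : Real.sinh u ≤ u * Real.cosh u := by
  have h := mono_aux hd0 (fun x hx => mul_nonneg hx.le (Real.sinh_pos_iff.mpr hx).le)
    Set.self_mem_Ici (Set.mem_Ici.mpr hu) hu
  simp at h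
  linarith

lemma f2_nonneg {u : ℝ} (hu : 0 < u) :
    0 ≤ (Real.cosh u + 1)/2 + u * Real.sinh u + u^2/4 * Real.cosh u - Real.sinh u := by
  have hc : 1 ≤ Real.cosh u := Real.one_le_cosh u
  have hs : 0 ≤ Real.sinh u := (Real.sinh_pos_iff.mpr hu).le
  rcases le_or_gt 1 u with h1 | h1
  · nlinarith
  · have key : (1 - u) * Real.sinh u ≤ (1 - u) * (u * Real.cosh u) :=
      mul_le_mul_of_nonneg_left (sinh_le_mul_cosh hu.le) (by linarith)
    nlinarith [sq_nonneg (1 - 2*u), Real.cosh_pos (x := u)]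

lemma f1_nonneg {u : ℝ} (hu : 0 ≤ u) :
    0 ≤ u/2 * (Real.cosh u + 1) + u^2/4 * Real.sinh u - Real.cosh u + 1 := by
  have h := mono_aux hd1 (fun x hx => f2_nonneg hx)
    Set.self_mem_Ici (Set.mem_Ici.mpr hu) hu
  simp at h
  linarith

lemma key_ineq {u : ℝ} (hu : 0 ≤ u) :
    Real.sinh u - u ≤ u^2/4 * (Real.cosh u + 1) := by
  have h := mono_aux hd2 (fun x hx => f1_nonneg hx.le)
    Set.self_mem_Ici (Set.mem_Ici.mpr hu) hu
  simp at h
  linarith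

lemma rpow_aux {p : ℝ} (hp : 1 < p) : (p + 1) ^ (1/p : ℝ) ≤ 2 := by
  have hp0 : 0 < p := by linarith
  have h1 : p + 1 ≤ (2:ℝ) ^ p := by
    have := one_add_mul_self_le_rpow_one_add (by norm_num : (-1:ℝ) ≤ 1) hp.le
    norm_num at this
    calc p + 1 = 1 + p * 1 := by ring
    _ ≤ (1+1:ℝ) ^ p := one_add_mul_self_le_rpow_one_add (by norm_num) hp.le
    _ = (2:ℝ) ^ p := by norm_num
  calc (p + 1) ^ (1/p : ℝ) ≤ ((2:ℝ) ^ p) ^ (1/p : ℝ) :=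
        Real.rpow_le_rpow (by linarith) h1 (by positivity)
  _ = (2:ℝ) ^ (p * (1/p)) := by rw [← Real.rpow_mul (by norm_num)]
  _ = 2 := by rw [mul_one_div, div_self hp0.ne', Real.rpow_one]

theorem geometric_logarithmic_mean_ineq (a b p : ℝ) (ha : 0 < a) (hab : a < b)
    (hp : 1 < p) :
    |Real.sqrt (a * b) - (b - a) / (Real.log b - Real.log a)| ≤
      ((Real.log b - Real.log a) / (4 * (p + 1) ^ (1 / p))) *
        ((a + b) / 2 + Real.sqrt (a * b)) := by
  have hb : 0 < b := ha.trans hab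
  have hla : Real.log a < Real.log b := Real.log_lt_log ha hab
  set m := (Real.log a + Real.log b) / 2 with hm
  set u := (Real.log b - Real.log a) / 2 with hudef
  have hu : 0 < u := by simp [hudef]; linarith
  have ha' : a = Real.exp (m - u) := by
    rw [show m - u = Real.log a by rw [hm, hudef]; ring, Real.exp_log ha]
  have hb' : b = Real.exp (m + u) := by
    rw [show m + u = Real.log b by rw [hm, hudef]; ring, Real.exp_log hb]
  have hE : 0 < Real.exp m := Real.exp_pos m
  have hsqrt : Real.sqrt (a * b) = Real.exp m := by
    have hab2 : a * b = (Real.exp m) ^ 2 := by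
      rw [ha', hb', ← Real.exp_add, sq, ← Real.exp_add]; ring_nf
    rw [hab2, Real.sqrt_sq hE.le]
  have hba : b - a = Real.exp m * (2 * Real.sinh u) := by
    rw [ha', hb', Real.sinh_eq,
      show m + u = m + u from rfl, Real.exp_add, show m - u = m + (-u) by ring,
      Real.exp_add]
    ring
  have haab : a + b = Real.exp m * (2 * Real.cosh u) := by
    rw [ha', hb', Real.cosh_eq, Real.exp_add, show m - u = m + (-u) by ring, Real.exp_add]
    ring
  have hlog : Real.log b - Real.log a = 2 * u := by rw [hudef]; ring
  rw [hsqrt, hba, haab, hlog]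
  set S := Real.sinh u
  set C := Real.cosh u
  have hS : u ≤ S := Real.self_le_sinh_iff.mpr hu.le
  have hC : 1 ≤ C := Real.one_le_cosh u
  have hkey : S - u ≤ u^2/4 * (C + 1) := key_ineq hu.le
  have hc2 : (p + 1) ^ (1/p : ℝ) ≤ 2 := rpow_aux hp
  have hc0 : 0 < (p + 1) ^ (1/p : ℝ) := Real.rpow_pos_of_pos (by linarith) _
  set c := (p + 1) ^ (1/p : ℝ)
  have hdivL : Real.exp m * (2 * S) / (2 * u) = Real.exp m * (S / u) := by
    field_simp
  have hL : Real.exp m - Real.exp m * (2 * S) / (2 * u) ≤ 0 := by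
    rw [hdivL]
    have : 1 ≤ S / u := (one_le_div hu).mpr hS
    nlinarith
  rw [abs_of_nonpos hL, hdivL]
  have hstep1 : Real.exp m * (S / u) - Real.exp m ≤ (u/4) * (Real.exp m * C + Real.exp m) := by
    have h1 : Real.exp m * (S / u) - Real.exp m = Real.exp m * (S - u) / u := by
      field_simp
    rw [h1, div_le_iff₀ hu]
    nlinarith
  have hstep2 : (u/4) * (Real.exp m * C + Real.exp m)
      ≤ (2 * u / (4 * c)) * (Real.exp m * (2 * C) / 2 + Real.exp m) := by
    have hEC : 0 ≤ Real.exp m * C + Real.exp m := by positivity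
    have hfrac : u / 4 ≤ 2 * u / (4 * c) := by
      rw [show (2:ℝ) * u / (4 * c) = u / (2 * c) by ring]
      exact div_le_div_of_nonneg_left hu.le (by positivity) (by linarith)
    calc (u/4) * (Real.exp m * C + Real.exp m)
        ≤ (2 * u / (4 * c)) * (Real.exp m * C + Real.exp m) :=
          mul_le_mul_of_nonneg_right hfrac hEC
      _ = (2 * u / (4 * c)) * (Real.exp m * (2 * C) / 2 + Real.exp m) := by ring
  linarith
end

section
/- For p > 1 and 0 < a < b, A(a,b)/I(a,b) ≤ exp( ((b-a)/(3·2^{(2p+1)/p})) ( H(a,b)^{-1} + 2A(a,b)^{-1} ) ), where A(a,b) = (a+b)/2, H(a,b) = 2ab/(a+b) is the harmonic mean, and I(a,b) = (1/e)(b^b/a^a)^{1/(b-a)} is the identric mean. -/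
open Real

/-- Padé-type lower bound for log: for `1 ≤ y`, `2(y-1)/(y+1) ≤ log y`. -/
lemma pade_log_bound {y : ℝ} (hy : 1 ≤ y) : 2 * (y - 1) / (y + 1) ≤ Real.log y := by
  have hy0 : 0 < y := lt_of_lt_of_le one_pos hy
  have hyp : 0 < y + 1 := by linarith
  rw [div_le_iff₀ hyp]
  set F : ℝ → ℝ := fun x => (x + 1) * Real.log x - 2 * (x - 1) with hF
  have hD : ∀ x : ℝ, 0 < x → HasDerivAt F (Real.log x + (x + 1) * x⁻¹ - 2) x := by
    intro x hx0
    have h1 : HasDerivAt (fun x : ℝ => (x + 1) * Real.log x)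
        (1 * Real.log x + (x + 1) * x⁻¹) x :=
      ((hasDerivAt_id x).add_const 1).mul (Real.hasDerivAt_log (ne_of_gt hx0))
    have h2 : HasDerivAt (fun x : ℝ => 2 * (x - 1)) 2 x := by
      simpa using ((hasDerivAt_id x).sub_const 1).const_mul 2
    have h3 := h1.sub h2
    rw [one_mul] at h3
    exact h3
  have key : MonotoneOn F (Set.Ici 1) := by
    apply monotoneOn_of_deriv_nonneg (convex_Ici 1)
    · apply ContinuousOn.sub
      · exact (continuousOn_id.add continuousOn_const).mul
          (Real.continuousOn_log.mono (by intro x hx; simp at hx ⊢; linarith))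
      · fun_prop
    · intro x hx
      rw [interior_Ici] at hx
      exact (hD x (lt_trans one_pos hx)).differentiableAt.differentiableWithinAt
    · intro x hx
      rw [interior_Ici] at hx
      have hx0 : 0 < x := lt_trans one_pos hx
      rw [(hD x hx0).deriv]
      have hlog : 1 - x⁻¹ ≤ Real.log x := by
        have := Real.log_le_sub_one_of_pos (show (0:ℝ) < x⁻¹ from inv_pos.mpr hx0)
        rw [Real.log_inv] at this
        linarith
      have hxx : (x + 1) * x⁻¹ = 1 + x⁻¹ := by field_simp
      rw [hxx]; linarith
  have h1 : F 1 ≤ F y := key (by simp) hy hy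
  simp only [hF, Real.log_one] at h1
  nlinarith [h1]

set_option maxHeartbeats 1600000 in
theorem arithmetic_identric_mean_ineq (a b p : ℝ) (ha : 0 < a) (hab : a < b)
    (hp : 1 < p) :
    ((a + b) / 2) / ((1 / Real.exp 1) * (b ^ b / a ^ a) ^ (1 / (b - a))) ≤
      Real.exp (((b - a) / (3 * 2 ^ ((2 * p + 1) / p))) *
        ((2 * a * b / (a + b))⁻¹ + 2 * ((a + b) / 2)⁻¹)) := by
  have hb : 0 < b := lt_trans ha hab
  have hba : 0 < b - a := by linarith
  set m : ℝ := (a + b) / 2 with hmdef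
  have hm : 0 < m := by rw [hmdef]; linarith
  -- positivity of identric mean
  have hIbase : 0 < b ^ b / a ^ a := div_pos (Real.rpow_pos_of_pos hb b) (Real.rpow_pos_of_pos ha a)
  have hI : 0 < (1 / Real.exp 1) * (b ^ b / a ^ a) ^ (1 / (b - a)) :=
    mul_pos (by positivity) (Real.rpow_pos_of_pos hIbase _)
  -- log of identric mean
  have hlogI : Real.log ((1 / Real.exp 1) * (b ^ b / a ^ a) ^ (1 / (b - a)))
      = -1 + (b * Real.log b - a * Real.log a) / (b - a) := by
    rw [Real.log_mul (by positivity) (ne_of_gt (Real.rpow_pos_of_pos hIbase _)),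
      Real.log_rpow hIbase, Real.log_div (ne_of_gt (Real.rpow_pos_of_pos hb b))
        (ne_of_gt (Real.rpow_pos_of_pos ha a)),
      Real.log_rpow hb, Real.log_rpow ha]
    rw [one_div, Real.log_inv, Real.log_exp]
    ring
  -- the LHS equals exp of its log
  have hLHS : ((a + b) / 2) / ((1 / Real.exp 1) * (b ^ b / a ^ a) ^ (1 / (b - a)))
      = Real.exp (Real.log m + 1 - (b * Real.log b - a * Real.log a) / (b - a)) := by
    rw [Real.exp_sub, Real.exp_add, Real.exp_log hm]
    rw [show (1 / Real.exp 1) * (b ^ b / a ^ a) ^ (1 / (b - a))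
        = Real.exp (-1 + (b * Real.log b - a * Real.log a) / (b - a)) from by
      rw [← hlogI, Real.exp_log hI]]
    rw [Real.exp_add, Real.exp_neg]
    rw [hmdef]
    field_simp
  rw [hLHS]
  apply Real.exp_le_exp.mpr
  have hmA : 0 < m + a := by linarith
  have hmB : 0 < m + b := by linarith
  -- Padé bounds
  have hma : 1 ≤ m / a := by rw [le_div_iff₀ ha, hmdef]; linarith
  have hbm : 1 ≤ b / m := by rw [le_div_iff₀ hm, hmdef]; linarith
  have p1 := pade_log_bound hma
  have p2 := pade_log_bound hbm
  rw [Real.log_div (ne_of_gt hm) (ne_of_gt ha)] at p1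
  rw [Real.log_div (ne_of_gt hb) (ne_of_gt hm)] at p2
  -- Step 1 : log-ratio bound by a rational function
  have step1 : Real.log m + 1 - (b * Real.log b - a * Real.log a) / (b - a)
      ≤ (b - a) ^ 2 / (4 * (m + a) * (m + b)) := by
    have q1 : 2 * a * (m - a) / (m + a) ≤ a * (Real.log m - Real.log a) := by
      have h := mul_le_mul_of_nonneg_left p1 (le_of_lt ha)
      have e1 : a * (2 * (m / a - 1) / (m / a + 1)) = 2 * a * (m - a) / (m + a) := by
        field_simp
      linarith [e1 ▸ h]
    have q2 : 2 * b * (b - m) / (m + b) ≤ b * (Real.log b - Real.log m) := by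
      have h := mul_le_mul_of_nonneg_left p2 (le_of_lt hb)
      have e2 : b * (2 * (b / m - 1) / (b / m + 1)) = 2 * b * (b - m) / (m + b) := by
        field_simp; ring
      linarith [e2 ▸ h]
    have hid : (b * Real.log b - a * Real.log a) / (b - a) - Real.log m
        = (a * (Real.log m - Real.log a) + b * (Real.log b - Real.log m)) / (b - a) := by
      field_simp; ring
    have hsum : 2 * a * (m - a) / (m + a) + 2 * b * (b - m) / (m + b)
        ≤ a * (Real.log m - Real.log a) + b * (Real.log b - Real.log m) := by linarith
    have hdiv : (2 * a * (m - a) / (m + a) + 2 * b * (b - m) / (m + b)) / (b - a)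
        ≤ (a * (Real.log m - Real.log a) + b * (Real.log b - Real.log m)) / (b - a) := by
      apply div_le_div_of_nonneg_right hsum hba.le
    have hexact : 1 - (2 * a * (m - a) / (m + a) + 2 * b * (b - m) / (m + b)) / (b - a)
        = (b - a) ^ 2 / (4 * (m + a) * (m + b)) := by
      rw [hmdef]; field_simp; ring
    linarith [hid ▸ hdiv, hexact]
  -- Step 2 : rational bound by (b-a)/24 * S
  have hS : (2 * a * b / (a + b))⁻¹ + 2 * ((a + b) / 2)⁻¹
      = (a + b) / (2 * a * b) + 4 / (a + b) := by
    rw [inv_div]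
    rw [show (2:ℝ) * ((a + b) / 2)⁻¹ = 4 / (a + b) by
      rw [inv_div]; ring]
  have step2 : (b - a) ^ 2 / (4 * (m + a) * (m + b))
      ≤ (b - a) / 24 * ((a + b) / (2 * a * b) + 4 / (a + b)) := by
    have hcert : 0 ≤ 3*b^4 - 8*a*b^3 + 106*a^2*b^2 + 88*a^3*b + 3*a^4 := by
      nlinarith [sq_nonneg (3*b - 4*a), sq_nonneg (a*b), sq_nonneg a, mul_pos ha hb,
        sq_nonneg (a*(b-4*a))]
    have hpoly : 48*a*b*(a+b)*(b-a) ≤ (a^2+10*a*b+b^2)*(3*a+b)*(a+3*b) := by nlinarith [hcert]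
    have h5 := mul_le_mul_of_nonneg_left hpoly hba.le
    rw [hmdef, show 4*((a+b)/2+a)*((a+b)/2+b) = (3*a+b)*(a+3*b) by ring,
      show (b - a) / 24 * ((a + b) / (2 * a * b) + 4 / (a + b))
        = ((b-a)*(a^2+10*a*b+b^2)) / (48*a*b*(a+b)) by field_simp; ring,
      div_le_div_iff₀ (by positivity) (by positivity)]
    nlinarith [h5]
  -- Step 3 : 2^((2p+1)/p) ≤ 8, hence coefficient comparison
  have hp0 : 0 < p := lt_trans one_pos hp
  have hexp3 : (2*p+1)/p ≤ 3 := by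
    rw [div_le_iff₀ hp0]; linarith
  have h8 : (2:ℝ) ^ ((2*p+1)/p) ≤ 8 := by
    calc (2:ℝ) ^ ((2*p+1)/p) ≤ (2:ℝ) ^ (3:ℝ) :=
          Real.rpow_le_rpow_of_exponent_le (by norm_num) hexp3
      _ = 8 := by
          rw [show (3:ℝ) = ((3:ℕ):ℝ) by norm_num, Real.rpow_natCast]; norm_num
  have hpow_pos : (0:ℝ) < 2 ^ ((2*p+1)/p) := Real.rpow_pos_of_pos (by norm_num) _
  have hSpos : 0 ≤ (2 * a * b / (a + b))⁻¹ + 2 * ((a + b) / 2)⁻¹ := by positivity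
  have step3 : (b - a) / 24 * ((2 * a * b / (a + b))⁻¹ + 2 * ((a + b) / 2)⁻¹)
      ≤ (b - a) / (3 * 2 ^ ((2*p+1)/p)) * ((2 * a * b / (a + b))⁻¹ + 2 * ((a + b) / 2)⁻¹) := by
    apply mul_le_mul_of_nonneg_right _ hSpos
    apply div_le_div_of_nonneg_left (le_of_lt hba) (by positivity)
    linarith
  calc Real.log m + 1 - (b * Real.log b - a * Real.log a) / (b - a)
      ≤ (b - a) ^ 2 / (4 * (m + a) * (m + b)) := step1
    _ ≤ (b - a) / 24 * ((a + b) / (2 * a * b) + 4 / (a + b)) := step2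
    _ = (b - a) / 24 * ((2 * a * b / (a + b))⁻¹ + 2 * ((a + b) / 2)⁻¹) := by rw [hS]
    _ ≤ _ := step3
end

section
/- For p > 1 and 0 < a < b, |H(a,b)^{-1} - L(a,b)^{-1}| ≤ (b-a)² B(p+1,p+1)^{1/p} · H(a³,b³)^{-1}, where H(x,y) = 2xy/(x+y) is the harmonic mean, L(a,b) = (b-a)/(ln b - ln a) is the logarithmic mean, and B is the Euler Beta function. -/
open Real intervalIntegral

/-- integral of a cubic polynomial -/
lemma integral_cubic' (a b c0 c1 c2 c3 : ℝ) :
    ∫ x in a..b, (c3 * x ^ 3 + c2 * x ^ 2 + c1 * x + c0) =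
      c3 * (b ^ 4 - a ^ 4) / 4 + c2 * (b ^ 3 - a ^ 3) / 3 +
        c1 * (b ^ 2 - a ^ 2) / 2 + c0 * (b - a) := by
  have i3 : IntervalIntegrable (fun x : ℝ => c3 * x ^ 3) MeasureTheory.volume a b :=
    (continuous_const.mul (continuous_pow 3)).intervalIntegrable _ _
  have i2 : IntervalIntegrable (fun x : ℝ => c2 * x ^ 2) MeasureTheory.volume a b :=
    (continuous_const.mul (continuous_pow 2)).intervalIntegrable _ _
  have i1 : IntervalIntegrable (fun x : ℝ => c1 * x) MeasureTheory.volume a b :=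
    (continuous_const.mul continuous_id).intervalIntegrable _ _
  have i0 : IntervalIntegrable (fun x : ℝ => c0) MeasureTheory.volume a b :=
    intervalIntegrable_const
  rw [integral_add ((i3.add i2).add i1) i0, integral_add (i3.add i2) i1,
    integral_add i3 i2, integral_const_mul, integral_const_mul, integral_const_mul,
    integral_pow, integral_pow, integral_id, integral_const, smul_eq_mul]
  norm_num
  ring

/-- tangent line inequality for rpow (from Bernoulli) -/
lemma tangent_rpow {x m q : ℝ} (hx : 0 ≤ x) (hm : 0 < m) (hq : 1 ≤ q) :
    m ^ q + q * m ^ (q - 1) * (x - m) ≤ x ^ q := by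
  have hs : -1 ≤ x / m - 1 := by
    have : 0 ≤ x / m := by positivity
    linarith
  have h := one_add_mul_self_le_rpow_one_add hs hq
  have h2 : (1 : ℝ) + (x / m - 1) = x / m := by ring
  rw [h2] at h
  have hdiv : (x / m) ^ q = x ^ q / m ^ q := Real.div_rpow hx hm.le q
  have hmq : (0 : ℝ) < m ^ q := Real.rpow_pos_of_pos hm q
  have hm1 : m ^ (q - 1) = m ^ q / m := by
    rw [Real.rpow_sub hm, Real.rpow_one]
  rw [hdiv] at h
  rw [hm1]
  have h3 := mul_le_mul_of_nonneg_left h hmq.le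
  calc m ^ q + q * (m ^ q / m) * (x - m) = m ^ q * (1 + q * (x / m - 1)) := by
        field_simp
    _ ≤ m ^ q * (x ^ q / m ^ q) := h3
    _ = x ^ q := by field_simp

theorem harmonic_logarithmic_mean_ineq (a b p : ℝ) (ha : 0 < a) (hab : a < b)
    (hp : 1 < p) :
    |(2 * a * b / (a + b))⁻¹ - ((b - a) / (Real.log b - Real.log a))⁻¹| ≤
      (b - a) ^ 2 * (∫ t in (0:ℝ)..1, t ^ p * (1 - t) ^ p) ^ (1 / p) *
        (2 * a ^ 3 * b ^ 3 / (a ^ 3 + b ^ 3))⁻¹ := by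
  have hb : 0 < b := ha.trans hab
  have hba : 0 < b - a := sub_pos.2 hab
  -- Beta-integral lower bound
  have hc1 : Continuous fun t : ℝ => t ^ p :=
    continuous_iff_continuousAt.2 fun x => continuousAt_rpow_const x p (Or.inr (by linarith))
  have hc2 : Continuous fun t : ℝ => (1 - t) ^ p :=
    hc1.comp (continuous_const.sub continuous_id)
  set c0 : ℝ := (6 : ℝ)⁻¹ ^ p with hc0
  set c1 : ℝ := p * (6 : ℝ)⁻¹ ^ (p - 1) with hc1def
  have hBl : (6 : ℝ)⁻¹ ^ p ≤ ∫ t in (0:ℝ)..1, t ^ p * (1 - t) ^ p := by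
    have hint1 : IntervalIntegrable
        (fun t : ℝ => c0 + c1 * (t * (1 - t) - 6⁻¹)) MeasureTheory.volume 0 1 := by
      apply Continuous.intervalIntegrable
      continuity
    have hint2 : IntervalIntegrable (fun t : ℝ => t ^ p * (1 - t) ^ p)
        MeasureTheory.volume 0 1 := (hc1.mul hc2).intervalIntegrable _ _
    have hpt : ∀ t ∈ Set.Icc (0:ℝ) 1,
        c0 + c1 * (t * (1 - t) - 6⁻¹) ≤ t ^ p * (1 - t) ^ p := by
      intro t ht
      obtain ⟨h0, h1⟩ := ht
      have h1t : (0:ℝ) ≤ 1 - t := by linarith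
      rw [← Real.mul_rpow h0 h1t]
      exact tangent_rpow (mul_nonneg h0 h1t) (by norm_num) hp.le
    have hlow : (∫ t in (0:ℝ)..1, (c0 + c1 * (t * (1 - t) - 6⁻¹))) = c0 := by
      rw [integral_congr (g := fun x : ℝ =>
        (0:ℝ) * x ^ 3 + (-c1) * x ^ 2 + c1 * x + (c0 - c1 * 6⁻¹))]
      · rw [integral_cubic']; ring
      · intro x _; ring
    calc (6 : ℝ)⁻¹ ^ p = c0 := rfl
      _ = ∫ t in (0:ℝ)..1, (c0 + c1 * (t * (1 - t) - 6⁻¹)) := hlow.symm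
      _ ≤ _ := integral_mono_on (by norm_num) hint1 hint2 hpt
  have hB : (6 : ℝ)⁻¹ ≤ (∫ t in (0:ℝ)..1, t ^ p * (1 - t) ^ p) ^ (1 / p) := by
    have hp0 : (0:ℝ) < p := by linarith
    have h := Real.rpow_le_rpow (by positivity) hBl (by positivity : (0:ℝ) ≤ 1 / p)
    rwa [← Real.rpow_mul (by norm_num : (0:ℝ) ≤ (6:ℝ)⁻¹),
      mul_one_div_cancel hp0.ne', Real.rpow_one] at h
  -- integrability of the two main integrands
  have hlin_int : IntervalIntegrable (fun x : ℝ => (a + b - x) / (a * b))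
      MeasureTheory.volume a b :=
    ((continuous_const.sub continuous_id).div_const _).intervalIntegrable _ _
  have hinv_int : IntervalIntegrable (fun x : ℝ => x⁻¹) MeasureTheory.volume a b := by
    apply intervalIntegrable_inv (f := fun x : ℝ => x)
    · intro x hx
      rw [Set.uIcc_of_le hab.le] at hx
      exact (lt_of_lt_of_le ha hx.1).ne'
    · exact continuousOn_id
  have hFi : IntervalIntegrable (fun x : ℝ => (a + b - x) / (a * b) - x⁻¹)
      MeasureTheory.volume a b := hlin_int.sub hinv_int
  have hGi : IntervalIntegrable (fun x : ℝ => (x - a) * (b - x) * (a + b - x) / (a ^ 2 * b ^ 2))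
      MeasureTheory.volume a b := by
    apply Continuous.intervalIntegrable
    continuity
  -- value of the F integral
  have hIF : (∫ x in a..b, ((a + b - x) / (a * b) - x⁻¹)) =
      (b - a) * (a + b) / (2 * a * b) - (Real.log b - Real.log a) := by
    rw [integral_sub hlin_int hinv_int, integral_inv_of_pos ha hb,
      Real.log_div hb.ne' ha.ne']
    congr 1
    rw [integral_div, integral_sub intervalIntegrable_const intervalIntegrable_id,
      integral_const, integral_id, smul_eq_mul]
    field_simp
    ring
  -- value of the G integral
  have hIG : (∫ x in a..b, (x - a) * (b - x) * (a + b - x) / (a ^ 2 * b ^ 2)) =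
      (b - a) ^ 3 * (a + b) / (12 * a ^ 2 * b ^ 2) := by
    rw [integral_congr (g := fun x : ℝ =>
      (1 / (a ^ 2 * b ^ 2)) * x ^ 3 + (-2 * (a + b) / (a ^ 2 * b ^ 2)) * x ^ 2 +
        (((a + b) ^ 2 + a * b) / (a ^ 2 * b ^ 2)) * x +
        (-(a * b * (a + b)) / (a ^ 2 * b ^ 2)))]
    · rw [integral_cubic']
      field_simp
      ring
    · intro x _
      field_simp
      ring
  -- pointwise nonnegativity of F
  have hF_nonneg : ∀ x ∈ Set.Icc a b, 0 ≤ (a + b - x) / (a * b) - x⁻¹ := by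
    intro x hx
    obtain ⟨hax, hxb⟩ := hx
    have hx0 : 0 < x := lt_of_lt_of_le ha hax
    rw [sub_nonneg, inv_eq_one_div, div_le_div_iff₀ hx0 (by positivity)]
    nlinarith [mul_nonneg (sub_nonneg.2 hax) (sub_nonneg.2 hxb)]
  -- pointwise F ≤ G
  have hFG : ∀ x ∈ Set.Icc a b,
      (a + b - x) / (a * b) - x⁻¹ ≤ (x - a) * (b - x) * (a + b - x) / (a ^ 2 * b ^ 2) := by
    intro x hx
    obtain ⟨hax, hxb⟩ := hx
    have hx0 : 0 < x := lt_of_lt_of_le ha hax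
    have hfact : (a + b - x) / (a * b) - x⁻¹ = (x - a) * (b - x) / (a * b * x) := by
      field_simp
      ring
    rw [hfact, div_le_div_iff₀ (by positivity) (by positivity)]
    nlinarith [mul_nonneg (mul_pos ha hb).le (sq_nonneg ((x - a) * (b - x)))]
  -- rewrite the LHS
  have hEeq : (2 * a * b / (a + b))⁻¹ - ((b - a) / (Real.log b - Real.log a))⁻¹ =
      (∫ x in a..b, ((a + b - x) / (a * b) - x⁻¹)) / (b - a) := by
    rw [inv_div, inv_div, hIF]
    field_simp
  have hInonneg : 0 ≤ (∫ x in a..b, ((a + b - x) / (a * b) - x⁻¹)) :=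
    integral_nonneg hab.le hF_nonneg
  rw [hEeq, abs_of_nonneg (div_nonneg hInonneg hba.le), inv_div]
  have hImono : (∫ x in a..b, ((a + b - x) / (a * b) - x⁻¹)) ≤
      (b - a) ^ 3 * (a + b) / (12 * a ^ 2 * b ^ 2) := by
    rw [← hIG]
    exact integral_mono_on hab.le hFi hGi hFG
  have hX : (0:ℝ) ≤ (a ^ 3 + b ^ 3) / (2 * a ^ 3 * b ^ 3) := by positivity
  have key : (a + b) / (12 * a ^ 2 * b ^ 2) ≤
      6⁻¹ * ((a ^ 3 + b ^ 3) / (2 * a ^ 3 * b ^ 3)) := by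
    have hfac : 0 ≤ 2 * a ^ 2 * b ^ 2 * (a + b) * (a - b) ^ 2 := by positivity
    calc (a + b) / (12 * a ^ 2 * b ^ 2) ≤ (a ^ 3 + b ^ 3) / (12 * a ^ 3 * b ^ 3) := by
          rw [div_le_div_iff₀ (by positivity) (by positivity)]
          nlinarith [hfac]
      _ = 6⁻¹ * ((a ^ 3 + b ^ 3) / (2 * a ^ 3 * b ^ 3)) := by ring
  calc (∫ x in a..b, ((a + b - x) / (a * b) - x⁻¹)) / (b - a)
      ≤ ((b - a) ^ 3 * (a + b) / (12 * a ^ 2 * b ^ 2)) / (b - a) := by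
        exact div_le_div_of_nonneg_right hImono hba.le
    _ = (b - a) ^ 2 * ((a + b) / (12 * a ^ 2 * b ^ 2)) := by
        field_simp
    _ ≤ (b - a) ^ 2 * (6⁻¹ * ((a ^ 3 + b ^ 3) / (2 * a ^ 3 * b ^ 3))) := by
        exact mul_le_mul_of_nonneg_left key (by positivity)
    _ ≤ (b - a) ^ 2 * ((∫ t in (0:ℝ)..1, t ^ p * (1 - t) ^ p) ^ (1 / p) *
          ((a ^ 3 + b ^ 3) / (2 * a ^ 3 * b ^ 3))) := by
        apply mul_le_mul_of_nonneg_left _ (by positivity)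
        exact mul_le_mul_of_nonneg_right hB hX
    _ = (b - a) ^ 2 * (∫ t in (0:ℝ)..1, t ^ p * (1 - t) ^ p) ^ (1 / p) *
          ((a ^ 3 + b ^ 3) / (2 * a ^ 3 * b ^ 3)) := by ring
end

section
/- Let f : I → ℝ be differentiable on the interior of I with f' integrable, and suppose |f'| is convex on [a,b]. For any partition a = x_0 < x_1 < ... < x_n = b, the midpoint-quadrature error satisfies |∫_a^b f(x)dx - Σ_{i=0}^{n-1} f((x_i+x_{i+1})/2)(x_{i+1}-x_i)| ≤ (1/2^{(2p+1)/p}) Σ_{i=0}^{n-1} ((x_{i+1}-x_i)²/2)(|f'(x_i)| + |f'(x_{i+1})|), for any p > 1; in particular (letting p → ∞ being not needed) the bound with constant 1/8 holds: |R| ≤ (1/8) Σ_i (x_{i+1}-x_i)²(|f'(x_i)|+|f'(x_{i+1})|). -/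
open Set MeasureTheory intervalIntegral Real Finset

lemma mqe_integral_quad (a b c₂ c₁ c₀ : ℝ) :
    ∫ s in a..b, (c₂*s^2 + c₁*s + c₀) =
      c₂*(b^3 - a^3)/3 + c₁*(b^2 - a^2)/2 + c₀*(b - a) := by
  have h2 : IntervalIntegrable (fun s : ℝ => c₂*s^2) volume a b :=
    (Continuous.intervalIntegrable (by continuity) a b)
  have h1 : IntervalIntegrable (fun s : ℝ => c₁*s) volume a b :=
    (Continuous.intervalIntegrable (by continuity) a b)
  have h0 : IntervalIntegrable (fun _ : ℝ => c₀) volume a b :=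
    intervalIntegrable_const
  rw [intervalIntegral.integral_add (h2.add h1) h0, intervalIntegral.integral_add h2 h1,
    intervalIntegral.integral_const_mul, intervalIntegral.integral_const_mul,
    integral_pow, integral_id, intervalIntegral.integral_const]
  push_cast
  simp only [smul_eq_mul]
  ring

lemma mqe_chord {S : Set ℝ} (g : ℝ → ℝ) (hconv : ConvexOn ℝ S g)
    {x y s : ℝ} (hx : x ∈ S) (hy : y ∈ S) (hxy : x < y) (hs : s ∈ Icc x y) :
    g s ≤ ((y - s) * g x + (s - x) * g y) / (y - x) := by
  have hyx : (0:ℝ) < y - x := by linarith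
  have h := hconv.2 hx hy
    (show (0:ℝ) ≤ (y - s)/(y - x) from div_nonneg (by linarith [hs.2]) hyx.le)
    (show (0:ℝ) ≤ (s - x)/(y - x) from div_nonneg (by linarith [hs.1]) hyx.le)
    (show (y - s)/(y - x) + (s - x)/(y - x) = 1 by field_simp; ring)
  rw [smul_eq_mul, smul_eq_mul] at h
  have hcomb : (y - s)/(y - x) * x + (s - x)/(y - x) * y = s := by
    field_simp
    ring
  rw [hcomb, smul_eq_mul, smul_eq_mul] at h
  have hre : ((y - s) * g x + (s - x) * g y) / (y - x)
      = (y - s)/(y - x) * g x + (s - x)/(y - x) * g y := by ring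
  rw [hre]
  exact h

lemma mqe_secant_lower {S : Set ℝ} (g : ℝ → ℝ) (hconv : ConvexOn ℝ S g)
    {x y s : ℝ} (hs : s ∈ S) (hy : y ∈ S) (hsx : s ≤ x) (hxy : x < y) :
    ((y - s) * g x - (x - s) * g y) / (y - x) ≤ g s := by
  have hyx : (0:ℝ) < y - x := by linarith
  rcases eq_or_lt_of_le hsx with rfl | hsx'
  · have : ((y - s) * g s - (s - s) * g y) / (y - s) = g s := by
      field_simp; ring
    rw [this]
  · have hys : (0:ℝ) < y - s := by linarith
    have h := hconv.2 hs hy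
      (show (0:ℝ) ≤ (y - x)/(y - s) from div_nonneg (by linarith) hys.le)
      (show (0:ℝ) ≤ (x - s)/(y - s) from div_nonneg (by linarith) hys.le)
      (show (y - x)/(y - s) + (x - s)/(y - s) = 1 by field_simp; ring)
    rw [smul_eq_mul, smul_eq_mul] at h
    have hcomb : (y - x)/(y - s) * s + (x - s)/(y - s) * y = x := by
      field_simp
      ring
    rw [hcomb, smul_eq_mul, smul_eq_mul] at h
    have h2 : g x * (y - s) ≤ (y - x) * g s + (x - s) * g y := by
      rw [div_mul_eq_mul_div, div_mul_eq_mul_div, ← add_div,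
        le_div_iff₀ hys] at h
      linarith [h]
    rw [div_le_iff₀ hyx]
    nlinarith [h2]

set_option maxHeartbeats 1000000 in
lemma mqe_main_upper (u v : ℝ) (huv : u < v) (g : ℝ → ℝ)
    (hconv : ConvexOn ℝ (Icc u v) g) (hpos : ∀ s ∈ Icc u v, 0 ≤ g s)
    (hgi : IntervalIntegrable g volume u v) :
    ∫ s in u..v, (if s ≤ (u+v)/2 then u - s else v - s) * g s
      ≤ (v - u)^2 * (g u + g v) / 16 := by
  set m := (u+v)/2 with hm
  have hum : u < m := by rw [hm]; linarith
  have hmv : m < v := by rw [hm]; linarith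
  have hvu : (0:ℝ) < v - u := by linarith
  have hvm0 : v - m ≠ 0 := by linarith
  have hu_mem : u ∈ Icc u v := left_mem_Icc.2 huv.le
  have hv_mem : v ∈ Icc u v := right_mem_Icc.2 huv.le
  have hm_mem : m ∈ Icc u v := ⟨hum.le, hmv.le⟩
  set A := g u with hAdef
  set B := g v with hBdef
  set γ := g m with hγdef
  have hA : 0 ≤ A := hpos u hu_mem
  have hB : 0 ≤ B := hpos v hv_mem
  have hγ : 0 ≤ γ := hpos m hm_mem
  -- midpoint convexity
  have hγle : 2 * γ ≤ A + B := by
    have h1 := mqe_chord g hconv hu_mem hv_mem huv ⟨hum.le, hmv.le⟩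
    have h2 : ((v - m) * A + (m - u) * B) / (v - u) = (A + B)/2 := by
      rw [hm]; field_simp; ring
    rw [← hAdef, ← hBdef, h2] at h1
    rw [hγdef]
    linarith
  -- integrability
  have hgi1 : IntervalIntegrable g volume u m := by
    apply hgi.mono_set
    rw [uIcc_of_le hum.le, uIcc_of_le huv.le]
    exact Icc_subset_Icc_right hmv.le
  have hgi2 : IntervalIntegrable g volume m v := by
    apply hgi.mono_set
    rw [uIcc_of_le hmv.le, uIcc_of_le huv.le]
    exact Icc_subset_Icc_left hum.le
  have iL : IntervalIntegrable (fun s => (s - u) * g s) volume u m :=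
    hgi1.continuousOn_mul (by fun_prop)
  have iLneg : IntervalIntegrable (fun s => (u - s) * g s) volume u m :=
    hgi1.continuousOn_mul (by fun_prop)
  have iR : IntervalIntegrable (fun s => (v - s) * g s) volume m v :=
    hgi2.continuousOn_mul (by fun_prop)
  -- splitting the integral
  have iK1 : IntervalIntegrable (fun s => (if s ≤ m then u - s else v - s) * g s) volume u m := by
    apply iLneg.congr
    rw [uIoc_of_le hum.le]
    intro s hs
    dsimp only
    rw [if_pos hs.2]
  have iK2 : IntervalIntegrable (fun s => (if s ≤ m then u - s else v - s) * g s) volume m v := by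
    apply iR.congr
    rw [uIoc_of_le hmv.le]
    intro s hs
    dsimp only
    rw [if_neg (not_le.2 hs.1)]
  have e1 : (∫ s in u..m, (if s ≤ m then u - s else v - s) * g s)
      = ∫ s in u..m, (u - s) * g s := by
    apply integral_congr
    intro s hs
    rw [uIcc_of_le hum.le] at hs
    simp only [if_pos hs.2]
  have e2 : (∫ s in m..v, (if s ≤ m then u - s else v - s) * g s)
      = ∫ s in m..v, (v - s) * g s := by
    apply integral_congr_ae'
    · filter_upwards with s hs
      rw [if_neg (not_le.2 hs.1)]
    · filter_upwards with s hs
      rw [Set.Ioc_eq_empty (by linarith)] at hs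
      exact absurd hs (Set.notMem_empty s)
  have e3 : (∫ s in u..m, (u - s) * g s) = -∫ s in u..m, (s - u) * g s := by
    rw [← intervalIntegral.integral_neg]
    apply integral_congr
    intro s _
    ring
  have hsplit : (∫ s in u..v, (if s ≤ m then u - s else v - s) * g s)
      = -(∫ s in u..m, (s - u) * g s) + ∫ s in m..v, (v - s) * g s := by
    rw [← integral_add_adjacent_intervals iK1 iK2, e1, e2, e3]
  rw [hsplit]
  -- bound on the right piece
  have hR : (∫ s in m..v, (v - s) * g s)
      ≤ γ * (v-u)^2/12 + B * (v-u)^2/24 := by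
    have iQ : IntervalIntegrable (fun s =>
        (1/(v-m)) * ((γ - B)*s^2 + (B*(v+m) - 2*v*γ)*s + (γ*v^2 - B*v*m)))
        volume m v := (Continuous.intervalIntegrable (by fun_prop) m v)
    have hmono := integral_mono_on hmv.le iR iQ (fun s hs => by
      have hc := mqe_chord g hconv hm_mem hv_mem hmv hs
      have h5 : (v - s) * g s ≤ (v - s) * (((v - s) * γ + (s - m) * B) / (v - m)) :=
        mul_le_mul_of_nonneg_left hc (by linarith [hs.2])
      have h6 : (v - s) * (((v - s) * γ + (s - m) * B) / (v - m))
          = (1/(v-m)) * ((γ - B)*s^2 + (B*(v+m) - 2*v*γ)*s + (γ*v^2 - B*v*m)) := by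
        field_simp
        ring
      linarith [h5, h6.le, h6.ge])
    have hval : (∫ s in m..v, (1/(v-m)) * ((γ - B)*s^2 + (B*(v+m) - 2*v*γ)*s
        + (γ*v^2 - B*v*m))) = γ * (v-u)^2/12 + B * (v-u)^2/24 := by
      rw [intervalIntegral.integral_const_mul, mqe_integral_quad, one_div,
        inv_mul_eq_div, div_eq_iff hvm0, hm]
      ring
    linarith [hmono, hval.le, hval.ge]
  -- pointwise lower bound on the left half (valid for any s in [u,m])
  have hptL : ∀ x ∈ Icc u m, (1/(v-m)) * ((B-γ)*x^2 + (γ*(u+v) - B*(u+m))*x + (B*u*m - γ*u*v))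
      ≤ (x - u) * g x := by
    intro s hs
    have hsec := mqe_secant_lower g hconv
      (⟨hs.1, le_trans hs.2 hmv.le⟩ : s ∈ Icc u v) hv_mem hs.2 hmv
    have h5 : (s - u) * (((v - s) * γ - (m - s) * B) / (v - m)) ≤ (s - u) * g s :=
      mul_le_mul_of_nonneg_left hsec (by linarith [hs.1])
    have h6 : (s - u) * (((v - s) * γ - (m - s) * B) / (v - m))
        = (1/(v-m)) * ((B-γ)*s^2 + (γ*(u+v) - B*(u+m))*s + (B*u*m - γ*u*v)) := by
      field_simp
      ring
    linarith [h5, h6.le, h6.ge]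
  rcases le_or_gt B (2*γ) with hcase | hcase
  · -- Case (i) : B ≤ 2γ, use the secant lower bound on all of [u,m]
    have iQ2 : IntervalIntegrable (fun s =>
        (1/(v-m)) * ((B-γ)*s^2 + (γ*(u+v) - B*(u+m))*s + (B*u*m - γ*u*v))) volume u m :=
      (Continuous.intervalIntegrable (by fun_prop) u m)
    have hLlow := integral_mono_on hum.le iQ2 iL hptL
    have hval2 : (∫ s in u..m, (1/(v-m)) * ((B-γ)*s^2 + (γ*(u+v) - B*(u+m))*s
        + (B*u*m - γ*u*v))) = γ*(v-u)^2/8 + (γ - B)*(v-u)^2/24 := by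
      rw [intervalIntegral.integral_const_mul, mqe_integral_quad, one_div,
        inv_mul_eq_div, div_eq_iff hvm0, hm]
      ring
    have hlin : 0 ≤ (A+B)/16 + γ/12 - B/12 := by linarith
    nlinarith [hR, hLlow, hval2.le, hval2.ge, mul_nonneg (sq_nonneg (v-u)) hlin]
  · by_cases hγ0 : γ = 0
    · -- degenerate case γ = 0
      have hLpos : 0 ≤ ∫ s in u..m, (s - u) * g s :=
        integral_nonneg hum.le (fun s hs =>
          mul_nonneg (by linarith [hs.1]) (hpos s ⟨hs.1, le_trans hs.2 hmv.le⟩))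
      have hlin : 0 ≤ (A+B)/16 - B/24 := by linarith
      rw [hγ0] at hR
      nlinarith [hR, hLpos, mul_nonneg (sq_nonneg (v-u)) hlin]
    · -- main case : 0 < γ, 2γ < B
      have hγpos : 0 < γ := lt_of_le_of_ne hγ (Ne.symm hγ0)
      have hBγ : 0 < B - γ := by linarith
      set Δ := γ*(v-u)/(2*(B-γ)) with hΔ
      have hΔpos : 0 < Δ := div_pos (mul_pos hγpos hvu) (by linarith)
      have hrel : 2*(B-γ)*Δ = γ*(v-u) := by
        rw [hΔ]
        field_simp
      have h2Δ : 2*Δ ≤ v - u := by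
        nlinarith [hrel, mul_pos hΔpos (show (0:ℝ) < B - 2*γ by linarith), hγpos, hΔpos]
      set s₁ := m - Δ with hs₁
      have hus₁ : u ≤ s₁ := by rw [hs₁, hm]; linarith
      have hs₁m : s₁ ≤ m := by rw [hs₁]; linarith [hΔpos]
      have iLa : IntervalIntegrable (fun s => (s - u) * g s) volume u s₁ := by
        apply iL.mono_set
        rw [uIcc_of_le hus₁, uIcc_of_le hum.le]
        exact Icc_subset_Icc_right hs₁m
      have iLb : IntervalIntegrable (fun s => (s - u) * g s) volume s₁ m := by
        apply iL.mono_set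
        rw [uIcc_of_le hs₁m, uIcc_of_le hum.le]
        exact Icc_subset_Icc_left hus₁
      have hsplitL : (∫ s in u..m, (s - u) * g s)
          = (∫ s in u..s₁, (s - u) * g s) + ∫ s in s₁..m, (s - u) * g s :=
        (integral_add_adjacent_intervals iLa iLb).symm
      have hpos1 : 0 ≤ ∫ s in u..s₁, (s - u) * g s :=
        integral_nonneg hus₁ (fun s hs => mul_nonneg (by linarith [hs.1])
          (hpos s ⟨hs.1, le_trans hs.2 (le_trans hs₁m hmv.le)⟩))
      have iQ3 : IntervalIntegrable (fun s =>
          (1/(v-m)) * ((B-γ)*s^2 + (γ*(u+v) - B*(u+m))*s + (B*u*m - γ*u*v))) volume s₁ m :=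
        (Continuous.intervalIntegrable (by fun_prop) s₁ m)
      have hLlow2 := integral_mono_on hs₁m iQ3 iLb (fun s hs =>
        hptL s ⟨le_trans hus₁ hs.1, hs.2⟩)
      have hval3 : (∫ s in s₁..m, (1/(v-m)) * ((B-γ)*s^2 + (γ*(u+v) - B*(u+m))*s
          + (B*u*m - γ*u*v))) = γ*Δ*(v-u)/4 - γ*Δ^2/6 := by
        rw [intervalIntegral.integral_const_mul, mqe_integral_quad, one_div,
          inv_mul_eq_div, div_eq_iff hvm0, hs₁, hm]
        linear_combination ((Δ^2/3 - (v-u)*Δ/4)/2) * hrel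
      have hKey : γ*Δ*(v-u)/4 - γ*Δ^2/6 ≤ ∫ s in u..m, (s - u) * g s := by
        rw [hsplitL]
        linarith [hpos1, hLlow2, hval3.le, hval3.ge]
      have hBΔ : B*Δ = γ*Δ + γ*(v-u)/2 := by linarith [hrel]
      have he : (0:ℝ) ≤ v - u - 2*Δ := by linarith
      have expand : 48*Δ*((v-u)^2*(A+B)/16
            - (γ*Δ^2/6 - γ*Δ*(v-u)/4 + γ*(v-u)^2/12 + B*(v-u)^2/24))
          = 3*A*Δ*(v-u)^2
            + γ*(8*Δ^3 + 6*Δ^2*(v-u-2*Δ) + (v-u-2*Δ)^3/2) := by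
        linear_combination (v-u)^2 * hBΔ
      have hnn : 0 ≤ 3*A*Δ*(v-u)^2
          + γ*(8*Δ^3 + 6*Δ^2*(v-u-2*Δ) + (v-u-2*Δ)^3/2) := by
        have t1 : 0 ≤ 3*A*Δ*(v-u)^2 :=
          mul_nonneg (mul_nonneg (by linarith) hΔpos.le) (sq_nonneg _)
        have t2 : 0 ≤ 8*Δ^3 + 6*Δ^2*(v-u-2*Δ) + (v-u-2*Δ)^3/2 := by
          have c1 : 0 ≤ Δ^3 := by positivity
          have c2 : 0 ≤ Δ^2*(v-u-2*Δ) := mul_nonneg (sq_nonneg _) he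
          have c3 : 0 ≤ (v-u-2*Δ)^3 := by positivity
          linarith
        nlinarith [mul_nonneg hγpos.le t2]
      have h48 : (0:ℝ) < 48*Δ := by linarith
      have hfin : γ*Δ^2/6 - γ*Δ*(v-u)/4 + γ*(v-u)^2/12 + B*(v-u)^2/24
          ≤ (v-u)^2*(A+B)/16 := by
        rw [expand] at *
        nlinarith [hnn, h48, mul_pos h48 h48]
      linarith [hR, hKey, hfin]

set_option maxHeartbeats 1000000 in
lemma mqe_main_lower (u v : ℝ) (huv : u < v) (g : ℝ → ℝ)
    (hconv : ConvexOn ℝ (Icc u v) g) (hpos : ∀ s ∈ Icc u v, 0 ≤ g s)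
    (hgi : IntervalIntegrable g volume u v) :
    -((v - u)^2 * (g u + g v) / 16)
      ≤ ∫ s in u..v, (if s ≤ (u+v)/2 then u - s else v - s) * g s := by
  set m := (u+v)/2 with hm
  set g' : ℝ → ℝ := fun s => g (u + v - s) with hg'
  have hconv' : ConvexOn ℝ (Icc u v) g' := by
    refine ⟨convex_Icc u v, ?_⟩
    intro x hx y hy a b ha hb hab
    have hx' : u + v - x ∈ Icc u v := ⟨by linarith [hx.2], by linarith [hx.1]⟩
    have hy' : u + v - y ∈ Icc u v := ⟨by linarith [hy.2], by linarith [hy.1]⟩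
    have hcomb : u + v - (a • x + b • y) = a • (u + v - x) + b • (u + v - y) := by
      simp only [smul_eq_mul]
      linear_combination (u + v) * hab.symm
    have h := hconv.2 hx' hy' ha hb hab
    simp only [hg']
    rw [hcomb]
    exact h
  have hpos' : ∀ s ∈ Icc u v, 0 ≤ g' s := fun s hs =>
    hpos _ ⟨by linarith [hs.2], by linarith [hs.1]⟩
  have hgi' : IntervalIntegrable g' volume u v := by
    have h := hgi.comp_sub_left (u + v)
    simpa using h.symm
  have H := mqe_main_upper u v huv g' hconv' hpos' hgi'
  have hgu : g' u = g v := by simp [hg']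
  have hgv : g' v = g u := by simp [hg']
  rw [hgu, hgv] at H
  -- transform the integral of the reflected function
  have e5 : (∫ s in u..v, (if s ≤ m then u - s else v - s) * g' s)
      = ∫ x in u..v,
          (if u + v - x ≤ m then u - (u + v - x) else v - (u + v - x)) * g x := by
    have := intervalIntegral.integral_comp_sub_left
      (fun t => (if u + v - t ≤ m then u - (u + v - t) else v - (u + v - t)) * g t) (u + v)
      (a := u) (b := v)
    have harg : ∀ x : ℝ, (if u + v - (u + v - x) ≤ m then u - (u + v - (u + v - x))
        else v - (u + v - (u + v - x))) * g (u + v - x)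
        = (if x ≤ m then u - x else v - x) * g' x := by
      intro x
      have h7 : u + v - (u + v - x) = x := by ring
      rw [h7]
    rw [show (u+v) - v = u by ring, show (u+v) - u = v by ring] at this
    calc (∫ s in u..v, (if s ≤ m then u - s else v - s) * g' s)
        = ∫ x in u..v, (if u + v - (u + v - x) ≤ m then u - (u + v - (u + v - x))
            else v - (u + v - (u + v - x))) * g (u + v - x) := by
          apply integral_congr
          intro x _
          exact (harg x).symm
      _ = ∫ x in u..v,
          (if u + v - x ≤ m then u - (u + v - x) else v - (u + v - x)) * g x := this
  have hae : ∀ᵐ x : ℝ ∂volume, x ≠ m := by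
    have hs : {x : ℝ | ¬ x ≠ m} = {m} := by ext y; simp
    rw [ae_iff, hs]
    exact measure_singleton m
  have e6 : (∫ x in u..v,
        (if u + v - x ≤ m then u - (u + v - x) else v - (u + v - x)) * g x)
      = ∫ x in u..v, -((if x ≤ m then u - x else v - x) * g x) := by
    apply intervalIntegral.integral_congr_ae
    filter_upwards [hae] with x hxm _
    rcases lt_or_gt_of_ne hxm with hlt | hgt
    · have h1 : ¬ (u + v - x ≤ m) := by rw [hm] at *; push_neg; linarith
      rw [if_neg h1, if_pos hlt.le]
      ring
    · have h1 : u + v - x ≤ m := by rw [hm] at *; linarith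
      rw [if_pos h1, if_neg (not_le.2 hgt)]
      ring
  rw [e5, e6, intervalIntegral.integral_neg] at H
  linarith [H]

lemma mqe_ext_right (u v r : ℝ) (g : ℝ → ℝ) (hconv : ConvexOn ℝ (Icc u v) g)
    (hpos : ∀ s ∈ Icc u v, 0 ≤ g s) (hr : r ∈ Icc u v) (hgr : g r = 0) :
    ConvexOn ℝ (Icc u v) (fun s => if s ≤ r then g s else 0) := by
  refine ⟨convex_Icc u v, ?_⟩
  intro x hx y hy a b ha hb hab
  have hz : a • x + b • y ∈ Icc u v := (convex_Icc u v) hx hy ha hb hab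
  simp only [smul_eq_mul] at *
  by_cases hzr : a*x + b*y ≤ r
  · rw [if_pos hzr]
    by_cases hxr : x ≤ r
    · by_cases hyr : y ≤ r
      · rw [if_pos hxr, if_pos hyr]
        have h := hconv.2 hx hy ha hb hab
        simpa using h
      · -- x ≤ r < y
        push_neg at hyr
        rw [if_pos hxr, if_neg (not_le.2 hyr)]
        rcases eq_or_lt_of_le hxr with rfl | hxr'
        · -- x = r : then z = r, g z ≤ 0 impossible unless =0
          have hid0 : a*x + b*y - x = b*(y-x) := by linear_combination x * hab
          have hzx : x ≤ a*x + b*y := by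
            nlinarith [mul_nonneg hb (show (0:ℝ) ≤ y - x by linarith), hid0]
          have hzeq : a*x + b*y = x := le_antisymm hzr hzx
          rw [hzeq, hgr]
          have : 0 ≤ a * g x := mul_nonneg ha (hpos x hx)
          simpa [hgr] using this
        · have hid0 : a*x + b*y - x = b*(y-x) := by linear_combination x * hab
          have hzx : x ≤ a*x + b*y := by
            nlinarith [mul_nonneg hb (show (0:ℝ) ≤ y - x by linarith), hid0]
          have hch := mqe_chord g hconv hx hr hxr' ⟨hzx, hzr⟩
          rw [hgr] at hch
          have hc1 : ((r - (a*x + b*y)) * g x + (a*x + b*y - x) * 0) / (r - x)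
              = (r - (a*x+b*y)) * g x / (r - x) := by ring
          rw [hc1] at hch
          have habr : r*(a+b) = r := by rw [hab]; ring
          have hid1 : r - (a*x+b*y) - a*(r-x) = -(b*(y-r)) := by linear_combination (-r) * hab
          have h8 : r - (a*x+b*y) ≤ a*(r-x) := by
            nlinarith [mul_nonneg hb (show (0:ℝ) ≤ y - r by linarith), hid1]
          have h9 : (r - (a*x+b*y)) * g x ≤ a*(r-x) * g x :=
            mul_le_mul_of_nonneg_right h8 (hpos x hx)
          have h10 : (r - (a*x+b*y)) * g x / (r - x) ≤ a * g x := by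
            rw [div_le_iff₀ (by linarith)]
            nlinarith [h9]
          simpa using le_trans hch (by linarith)
    · by_cases hyr : y ≤ r
      · -- y ≤ r < x
        push_neg at hxr
        rw [if_neg (not_le.2 hxr), if_pos hyr]
        rcases eq_or_lt_of_le hyr with rfl | hyr'
        · have hid0 : a*x + b*y - y = a*(x-y) := by linear_combination y * hab
          have hzy : y ≤ a*x + b*y := by
            nlinarith [mul_nonneg ha (show (0:ℝ) ≤ x - y by linarith), hid0]
          have hzeq : a*x + b*y = y := le_antisymm hzr hzy
          rw [hzeq, hgr]
          have : 0 ≤ b * g y := mul_nonneg hb (hpos y hy)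
          simpa [hgr] using this
        · have hid0 : a*x + b*y - y = a*(x-y) := by linear_combination y * hab
          have hzy : y ≤ a*x + b*y := by
            nlinarith [mul_nonneg ha (show (0:ℝ) ≤ x - y by linarith), hid0]
          have hch := mqe_chord g hconv hy hr hyr' ⟨hzy, hzr⟩
          rw [hgr] at hch
          have hc1 : ((r - (a*x + b*y)) * g y + (a*x + b*y - y) * 0) / (r - y)
              = (r - (a*x+b*y)) * g y / (r - y) := by ring
          rw [hc1] at hch
          have hid1 : r - (a*x+b*y) - b*(r-y) = -(a*(x-r)) := by linear_combination (-r) * hab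
          have h8 : r - (a*x+b*y) ≤ b*(r-y) := by
            nlinarith [mul_nonneg ha (show (0:ℝ) ≤ x - r by linarith), hid1]
          have h9 : (r - (a*x+b*y)) * g y ≤ b*(r-y) * g y :=
            mul_le_mul_of_nonneg_right h8 (hpos y hy)
          have h10 : (r - (a*x+b*y)) * g y / (r - y) ≤ b * g y := by
            rw [div_le_iff₀ (by linarith)]
            nlinarith [h9]
          simpa using le_trans hch (by linarith)
      · -- r < x, r < y : impossible since z ≤ r
        push_neg at hxr hyr
        exfalso
        have hid : a*x + b*y - r = a*(x-r) + b*(y-r) := by linear_combination r * hab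
        have hc : (0:ℝ) < min (x-r) (y-r) := lt_min (by linarith) (by linarith)
        have hac : a * min (x-r) (y-r) ≤ a*(x-r) :=
          mul_le_mul_of_nonneg_left (min_le_left _ _) ha
        have hbc : b * min (x-r) (y-r) ≤ b*(y-r) :=
          mul_le_mul_of_nonneg_left (min_le_right _ _) hb
        have hsum : a * min (x-r) (y-r) + b * min (x-r) (y-r) = min (x-r) (y-r) := by
          linear_combination (min (x-r) (y-r)) * hab
        linarith
  · rw [if_neg hzr]
    have t1 : 0 ≤ a * (if x ≤ r then g x else 0) := by
      by_cases hxr : x ≤ r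
      · rw [if_pos hxr]; exact mul_nonneg ha (hpos x hx)
      · rw [if_neg hxr]; simp
    have t2 : 0 ≤ b * (if y ≤ r then g y else 0) := by
      by_cases hyr : y ≤ r
      · rw [if_pos hyr]; exact mul_nonneg hb (hpos y hy)
      · rw [if_neg hyr]; simp
    linarith

lemma mqe_ext_left (u v r : ℝ) (g : ℝ → ℝ) (hconv : ConvexOn ℝ (Icc u v) g)
    (hpos : ∀ s ∈ Icc u v, 0 ≤ g s) (hr : r ∈ Icc u v) (hgr : g r = 0) :
    ConvexOn ℝ (Icc u v) (fun s => if r ≤ s then g s else 0) := by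
  refine ⟨convex_Icc u v, ?_⟩
  intro x hx y hy a b ha hb hab
  have hz : a • x + b • y ∈ Icc u v := (convex_Icc u v) hx hy ha hb hab
  simp only [smul_eq_mul] at *
  by_cases hzr : r ≤ a*x + b*y
  · rw [if_pos hzr]
    by_cases hxr : r ≤ x
    · by_cases hyr : r ≤ y
      · rw [if_pos hxr, if_pos hyr]
        have h := hconv.2 hx hy ha hb hab
        simpa using h
      · -- y < r ≤ x
        push_neg at hyr
        rw [if_pos hxr, if_neg (not_le.2 hyr)]
        rcases eq_or_lt_of_le hxr with rfl | hxr'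
        · have hid0 : a*r + b*y - r = b*(y-r) := by linear_combination r * hab
          have hzx : a*r + b*y ≤ r := by
            nlinarith [mul_nonneg hb (show (0:ℝ) ≤ r - y by linarith), hid0]
          have hzeq : a*r + b*y = r := le_antisymm hzx hzr
          rw [hzeq, hgr]
          have : 0 ≤ a * g r := mul_nonneg ha (hpos r hx)
          simpa [hgr] using this
        · have hid0 : a*x + b*y - x = b*(y-x) := by linear_combination x * hab
          have hzx : a*x + b*y ≤ x := by
            nlinarith [mul_nonneg hb (show (0:ℝ) ≤ x - y by linarith), hid0]
          have hch := mqe_chord g hconv hr hx hxr' ⟨hzr, hzx⟩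
          rw [hgr] at hch
          have hc1 : ((x - (a*x + b*y)) * 0 + (a*x + b*y - r) * g x) / (x - r)
              = (a*x+b*y - r) * g x / (x - r) := by ring
          rw [hc1] at hch
          have hid1 : a*x+b*y - r - a*(x-r) = b*(y-r) := by linear_combination r * hab
          have h8 : a*x+b*y - r ≤ a*(x-r) := by
            nlinarith [mul_nonneg hb (show (0:ℝ) ≤ r - y by linarith), hid1]
          have h9 : (a*x+b*y - r) * g x ≤ a*(x-r) * g x :=
            mul_le_mul_of_nonneg_right h8 (hpos x hx)
          have h10 : (a*x+b*y - r) * g x / (x - r) ≤ a * g x := by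
            rw [div_le_iff₀ (by linarith)]
            nlinarith [h9]
          simpa using le_trans hch (by linarith)
    · by_cases hyr : r ≤ y
      · -- x < r ≤ y
        push_neg at hxr
        rw [if_neg (not_le.2 hxr), if_pos hyr]
        rcases eq_or_lt_of_le hyr with rfl | hyr'
        · have hid0 : a*x + b*r - r = a*(x-r) := by linear_combination r * hab
          have hzy : a*x + b*r ≤ r := by
            nlinarith [mul_nonneg ha (show (0:ℝ) ≤ r - x by linarith), hid0]
          have hzeq : a*x + b*r = r := le_antisymm hzy hzr
          rw [hzeq, hgr]
          have : 0 ≤ b * g r := mul_nonneg hb (hpos r hy)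
          simpa [hgr] using this
        · have hid0 : a*x + b*y - y = a*(x-y) := by linear_combination y * hab
          have hzy : a*x + b*y ≤ y := by
            nlinarith [mul_nonneg ha (show (0:ℝ) ≤ y - x by linarith), hid0]
          have hch := mqe_chord g hconv hr hy hyr' ⟨hzr, hzy⟩
          rw [hgr] at hch
          have hc1 : ((y - (a*x + b*y)) * 0 + (a*x + b*y - r) * g y) / (y - r)
              = (a*x+b*y - r) * g y / (y - r) := by ring
          rw [hc1] at hch
          have hid1 : a*x+b*y - r - b*(y-r) = a*(x-r) := by linear_combination r * hab
          have h8 : a*x+b*y - r ≤ b*(y-r) := by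
            nlinarith [mul_nonneg ha (show (0:ℝ) ≤ r - x by linarith), hid1]
          have h9 : (a*x+b*y - r) * g y ≤ b*(y-r) * g y :=
            mul_le_mul_of_nonneg_right h8 (hpos y hy)
          have h10 : (a*x+b*y - r) * g y / (y - r) ≤ b * g y := by
            rw [div_le_iff₀ (by linarith)]
            nlinarith [h9]
          simpa using le_trans hch (by linarith)
      · push_neg at hxr hyr
        exfalso
        have hid : r - (a*x + b*y) = a*(r-x) + b*(r-y) := by linear_combination (-r) * hab
        have hc : (0:ℝ) < min (r-x) (r-y) := lt_min (by linarith) (by linarith)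
        have hac : a * min (r-x) (r-y) ≤ a*(r-x) :=
          mul_le_mul_of_nonneg_left (min_le_left _ _) ha
        have hbc : b * min (r-x) (r-y) ≤ b*(r-y) :=
          mul_le_mul_of_nonneg_left (min_le_right _ _) hb
        have hsum : a * min (r-x) (r-y) + b * min (r-x) (r-y) = min (r-x) (r-y) := by
          linear_combination (min (r-x) (r-y)) * hab
        linarith
  · rw [if_neg hzr]
    have t1 : 0 ≤ a * (if r ≤ x then g x else 0) := by
      by_cases hxr : r ≤ x
      · rw [if_pos hxr]; exact mul_nonneg ha (hpos x hx)
      · rw [if_neg hxr]; simp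
    have t2 : 0 ≤ b * (if r ≤ y then g y else 0) := by
      by_cases hyr : r ≤ y
      · rw [if_pos hyr]; exact mul_nonneg hb (hpos y hy)
      · rw [if_neg hyr]; simp
    linarith

lemma mqe_iK (u v : ℝ) (huv : u < v) (g : ℝ → ℝ)
    (hgi : IntervalIntegrable g volume u v) :
    IntervalIntegrable (fun s => (if s ≤ (u+v)/2 then u - s else v - s) * g s) volume u v := by
  set m := (u+v)/2 with hm
  have hum : u < m := by rw [hm]; linarith
  have hmv : m < v := by rw [hm]; linarith
  have hgi1 : IntervalIntegrable g volume u m := by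
    apply hgi.mono_set
    rw [uIcc_of_le hum.le, uIcc_of_le huv.le]
    exact Icc_subset_Icc_right hmv.le
  have hgi2 : IntervalIntegrable g volume m v := by
    apply hgi.mono_set
    rw [uIcc_of_le hmv.le, uIcc_of_le huv.le]
    exact Icc_subset_Icc_left hum.le
  have iK1 : IntervalIntegrable (fun s => (if s ≤ m then u - s else v - s) * g s) volume u m := by
    apply (hgi1.continuousOn_mul (g := fun s => u - s) (by fun_prop)).congr
    rw [uIoc_of_le hum.le]
    intro s hs
    dsimp only
    rw [if_pos hs.2]
  have iK2 : IntervalIntegrable (fun s => (if s ≤ m then u - s else v - s) * g s) volume m v := by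
    apply (hgi2.continuousOn_mul (g := fun s => v - s) (by fun_prop)).congr
    rw [uIoc_of_le hmv.le]
    intro s hs
    dsimp only
    rw [if_neg (not_le.2 hs.1)]
  exact iK1.trans iK2

lemma mqe_piece_left (u v r : ℝ) (huv : u < v) (hr : r ∈ Ioo u v) (g : ℝ → ℝ)
    (hconv : ConvexOn ℝ (Icc u v) g) (hpos : ∀ s ∈ Icc u v, 0 ≤ g s)
    (hgi : IntervalIntegrable g volume u v) (hgr : g r = 0) :
    |∫ s in u..r, (if s ≤ (u+v)/2 then u - s else v - s) * g s| ≤ (v - u)^2 * g u / 16 := by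
  set K : ℝ → ℝ := fun s => if s ≤ (u+v)/2 then u - s else v - s with hK
  set gR : ℝ → ℝ := fun s => if s ≤ r then g s else 0 with hgR
  have hrm : r ∈ Icc u v := ⟨hr.1.le, hr.2.le⟩
  have hconvR := mqe_ext_right u v r g hconv hpos hrm hgr
  have hposR : ∀ s ∈ Icc u v, 0 ≤ gR s := by
    intro s hs
    rw [hgR]
    by_cases h : s ≤ r
    · simpa [h] using hpos s hs
    · simp [h]
  have hgiu_r : IntervalIntegrable g volume u r := by
    apply hgi.mono_set
    rw [uIcc_of_le hr.1.le, uIcc_of_le huv.le]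
    exact Icc_subset_Icc_right hr.2.le
  have i1 : IntervalIntegrable gR volume u r := by
    apply hgiu_r.congr
    rw [uIoc_of_le hr.1.le]
    intro s hs
    rw [hgR]
    simp [hs.2]
  have i2 : IntervalIntegrable gR volume r v := by
    apply (_root_.intervalIntegrable_const (c := (0:ℝ))).congr
    rw [uIoc_of_le hr.2.le]
    intro s hs
    rw [hgR]
    simp [not_le.2 hs.1]
  have hgiR : IntervalIntegrable gR volume u v := i1.trans i2
  have H1 := mqe_main_upper u v huv gR hconvR hposR hgiR
  have H2 := mqe_main_lower u v huv gR hconvR hposR hgiR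
  have hvR : gR v = 0 := by rw [hgR]; simp [not_le.2 hr.2]
  have huR : gR u = g u := by rw [hgR]; simp [hr.1.le]
  rw [hvR, huR, add_zero] at H1 H2
  -- the integral of K*gR over [u,v] equals the integral of K*g over [u,r]
  have iKgR := mqe_iK u v huv gR hgiR
  have iP1 : IntervalIntegrable (fun s => K s * gR s) volume u r := by
    apply iKgR.mono_set
    rw [uIcc_of_le hr.1.le, uIcc_of_le huv.le]
    exact Icc_subset_Icc_right hr.2.le
  have iP2 : IntervalIntegrable (fun s => K s * gR s) volume r v := by
    apply iKgR.mono_set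
    rw [uIcc_of_le hr.2.le, uIcc_of_le huv.le]
    exact Icc_subset_Icc_left hr.1.le
  have hsplit : (∫ s in u..v, K s * gR s)
      = (∫ s in u..r, K s * gR s) + ∫ s in r..v, K s * gR s :=
    (integral_add_adjacent_intervals iP1 iP2).symm
  have hz2 : (∫ s in r..v, K s * gR s) = 0 := by
    rw [show (0:ℝ) = ∫ s in r..v, (0:ℝ) by simp]
    apply integral_congr_ae'
    · filter_upwards with s hs
      rw [hgR]
      simp [not_le.2 hs.1]
    · filter_upwards with s hs
      rw [Set.Ioc_eq_empty (by linarith [hr.2])] at hs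
      exact absurd hs (Set.notMem_empty s)
  have he1 : (∫ s in u..r, K s * gR s) = ∫ s in u..r, K s * g s := by
    apply integral_congr_ae'
    · filter_upwards with s hs
      rw [hgR]
      simp [hs.2]
    · filter_upwards with s hs
      rw [Set.Ioc_eq_empty (by linarith [hr.1])] at hs
      exact absurd hs (Set.notMem_empty s)
  rw [hsplit, hz2, add_zero, he1] at H1 H2
  rw [abs_le]
  constructor
  · linarith [H2]
  · linarith [H1]

lemma mqe_piece_right (u v r : ℝ) (huv : u < v) (hr : r ∈ Ioo u v) (g : ℝ → ℝ)
    (hconv : ConvexOn ℝ (Icc u v) g) (hpos : ∀ s ∈ Icc u v, 0 ≤ g s)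
    (hgi : IntervalIntegrable g volume u v) (hgr : g r = 0) :
    |∫ s in r..v, (if s ≤ (u+v)/2 then u - s else v - s) * g s| ≤ (v - u)^2 * g v / 16 := by
  set K : ℝ → ℝ := fun s => if s ≤ (u+v)/2 then u - s else v - s with hK
  set gL : ℝ → ℝ := fun s => if r ≤ s then g s else 0 with hgL
  have hrm : r ∈ Icc u v := ⟨hr.1.le, hr.2.le⟩
  have hconvL := mqe_ext_left u v r g hconv hpos hrm hgr
  have hposL : ∀ s ∈ Icc u v, 0 ≤ gL s := by
    intro s hs
    rw [hgL]
    by_cases h : r ≤ s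
    · simpa [h] using hpos s hs
    · simp [h]
  have hgir_v : IntervalIntegrable g volume r v := by
    apply hgi.mono_set
    rw [uIcc_of_le hr.2.le, uIcc_of_le huv.le]
    exact Icc_subset_Icc_left hr.1.le
  have i1 : IntervalIntegrable gL volume u r := by
    apply (_root_.intervalIntegrable_const (c := (0:ℝ))).congr
    rw [uIoc_of_le hr.1.le]
    intro s hs
    rw [hgL]
    rcases eq_or_lt_of_le hs.2 with rfl | h
    · simp [hgr]
    · simp [not_le.2 h]
  have i2 : IntervalIntegrable gL volume r v := by
    apply hgir_v.congr
    rw [uIoc_of_le hr.2.le]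
    intro s hs
    rw [hgL]
    simp [hs.1.le]
  have hgiL : IntervalIntegrable gL volume u v := i1.trans i2
  have H1 := mqe_main_upper u v huv gL hconvL hposL hgiL
  have H2 := mqe_main_lower u v huv gL hconvL hposL hgiL
  have huL : gL u = 0 := by rw [hgL]; simp [not_le.2 hr.1]
  have hvL : gL v = g v := by rw [hgL]; simp [hr.2.le]
  rw [huL, hvL, zero_add] at H1 H2
  have iKgL := mqe_iK u v huv gL hgiL
  have iP1 : IntervalIntegrable (fun s => K s * gL s) volume u r := by
    apply iKgL.mono_set
    rw [uIcc_of_le hr.1.le, uIcc_of_le huv.le]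
    exact Icc_subset_Icc_right hr.2.le
  have iP2 : IntervalIntegrable (fun s => K s * gL s) volume r v := by
    apply iKgL.mono_set
    rw [uIcc_of_le hr.2.le, uIcc_of_le huv.le]
    exact Icc_subset_Icc_left hr.1.le
  have hsplit : (∫ s in u..v, K s * gL s)
      = (∫ s in u..r, K s * gL s) + ∫ s in r..v, K s * gL s :=
    (integral_add_adjacent_intervals iP1 iP2).symm
  have hz1 : (∫ s in u..r, K s * gL s) = 0 := by
    rw [show (0:ℝ) = ∫ s in u..r, (0:ℝ) by simp]
    apply integral_congr_ae'
    · filter_upwards with s hs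
      rw [hgL]
      rcases eq_or_lt_of_le hs.2 with rfl | h
      · simp [hgr]
      · simp [not_le.2 h]
    · filter_upwards with s hs
      rw [Set.Ioc_eq_empty (by linarith [hr.1])] at hs
      exact absurd hs (Set.notMem_empty s)
  have he1 : (∫ s in r..v, K s * gL s) = ∫ s in r..v, K s * g s := by
    apply integral_congr_ae'
    · filter_upwards with s hs
      rw [hgL]
      simp [hs.1.le]
    · filter_upwards with s hs
      rw [Set.Ioc_eq_empty (by linarith [hr.2])] at hs
      exact absurd hs (Set.notMem_empty s)
  rw [hsplit, hz1, zero_add, he1] at H1 H2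
  rw [abs_le]
  exact ⟨by linarith [H2], by linarith [H1]⟩

lemma mqe_ivt (f : ℝ → ℝ) {x y : ℝ} (hxy : x < y)
    (hd : ∀ s ∈ Icc x y, HasDerivAt f (deriv f s) s)
    (hsign : deriv f x * deriv f y < 0) :
    ∃ z ∈ Ioo x y, deriv f z = 0 := by
  have hder : ∀ s ∈ Icc x y, HasDerivWithinAt f (deriv f s) (Icc x y) s :=
    fun s hs => (hd s hs).hasDerivWithinAt
  have himg := (ordConnected_Icc (a := x) (b := y)).image_hasDerivWithinAt hder
  have hxm : x ∈ Icc x y := left_mem_Icc.2 hxy.le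
  have hym : y ∈ Icc x y := right_mem_Icc.2 hxy.le
  have hne_x : deriv f x ≠ 0 := by intro h; rw [h] at hsign; simp at hsign
  have hne_y : deriv f y ≠ 0 := by intro h; rw [h] at hsign; simp at hsign
  have h0 : (0:ℝ) ∈ deriv f '' Icc x y := by
    rcases mul_neg_iff.1 hsign with ⟨hp, hn⟩ | ⟨hn, hp⟩
    · exact himg.out (mem_image_of_mem _ hym) (mem_image_of_mem _ hxm) ⟨hn.le, hp.le⟩
    · exact himg.out (mem_image_of_mem _ hxm) (mem_image_of_mem _ hym) ⟨hn.le, hp.le⟩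
  obtain ⟨z, hz, hz0⟩ := h0
  refine ⟨z, ⟨lt_of_le_of_ne hz.1 ?_, lt_of_le_of_ne hz.2 ?_⟩, hz0⟩
  · intro h; exact hne_x (h ▸ hz0)
  · intro h; exact hne_y (h ▸ hz0)

lemma mqe_zero_between {u v : ℝ} (g : ℝ → ℝ) (hconv : ConvexOn ℝ (Icc u v) g)
    (hpos : ∀ s ∈ Icc u v, 0 ≤ g s) {z r w : ℝ} (hz : z ∈ Icc u v) (hrr : r ∈ Icc u v)
    (hgz : g z = 0) (hgr : g r = 0) (hzw : z ≤ w) (hwr : w ≤ r) : g w = 0 := by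
  have hwm : w ∈ Icc u v := ⟨le_trans hz.1 hzw, le_trans hwr hrr.2⟩
  rcases eq_or_lt_of_le (le_trans hzw hwr) with heq | hlt
  · have : w = z := le_antisymm (by rw [heq]; exact hwr) hzw
    rw [this, hgz]
  · have hyx : (0:ℝ) < r - z := by linarith
    have h := hconv.2 hz hrr
      (show (0:ℝ) ≤ (r - w)/(r - z) from div_nonneg (by linarith) hyx.le)
      (show (0:ℝ) ≤ (w - z)/(r - z) from div_nonneg (by linarith) hyx.le)
      (show (r - w)/(r - z) + (w - z)/(r - z) = 1 by field_simp; ring)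
    simp only [smul_eq_mul] at h
    have hcomb : (r - w)/(r - z) * z + (w - z)/(r - z) * r = w := by
      field_simp
      ring
    rw [hcomb, hgz, hgr, mul_zero, mul_zero, add_zero] at h
    exact le_antisymm h (hpos w hwm)

set_option maxHeartbeats 2000000 in
lemma mqe_interval (f : ℝ → ℝ) (I : Set ℝ) (hI : IsOpen I) (u v : ℝ) (huv : u < v)
    (hsub : Icc u v ⊆ I) (hf : DifferentiableOn ℝ f I)
    (hint : IntervalIntegrable (deriv f) volume u v)
    (hconv : ConvexOn ℝ (Icc u v) (fun x => |deriv f x|)) :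
    |(∫ t in u..v, f t) - f ((u+v)/2) * (v-u)|
      ≤ (v-u)^2 * (|deriv f u| + |deriv f v|) / 16 := by
  set K : ℝ → ℝ := fun s => if s ≤ (u+v)/2 then u - s else v - s with hK
  set g : ℝ → ℝ := fun s => |deriv f s| with hgdef
  set m : ℝ := (u+v)/2 with hm
  have hum : u < m := by rw [hm]; linarith
  have hmv : m < v := by rw [hm]; linarith
  have hd : ∀ s ∈ Icc u v, HasDerivAt f (deriv f s) s := fun s hs =>
    (hf.differentiableAt (hI.mem_nhds (hsub hs))).hasDerivAt
  have hpos : ∀ s ∈ Icc u v, 0 ≤ g s := fun s _ => abs_nonneg _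
  have hgi : IntervalIntegrable g volume u v := hint.abs
  have hfc : ∀ c d : ℝ, u ≤ c → c ≤ d → d ≤ v → ContinuousOn f (uIcc c d) := by
    intro c d hc hcd hd'
    rw [uIcc_of_le hcd]
    intro s hs
    exact ((hd s ⟨le_trans hc hs.1, le_trans hs.2 hd'⟩).continuousAt).continuousWithinAt
  have hintp : ∀ c d : ℝ, u ≤ c → c ≤ d → d ≤ v →
      IntervalIntegrable (deriv f) volume c d := by
    intro c d hc hcd hd'
    apply hint.mono_set
    rw [uIcc_of_le hcd, uIcc_of_le huv.le]
    exact Icc_subset_Icc hc hd'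
  -- FTC representation
  have hrep : (∫ t in u..v, f t) - f m * (v-u) = ∫ s in u..v, K s * deriv f s := by
    have P1 := intervalIntegral.integral_mul_deriv_eq_deriv_mul
      (u := fun s => u - s) (u' := fun _ => (-1:ℝ)) (v := f) (v' := deriv f)
      (a := u) (b := m)
      (fun s hs => by simpa using ((hasDerivAt_id s).const_sub u))
      (fun s hs => hd s (by rw [uIcc_of_le hum.le] at hs; exact ⟨hs.1, le_trans hs.2 hmv.le⟩))
      intervalIntegrable_const (hintp u m le_rfl hum.le hmv.le)
    have P2 := intervalIntegral.integral_mul_deriv_eq_deriv_mul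
      (u := fun s => v - s) (u' := fun _ => (-1:ℝ)) (v := f) (v' := deriv f)
      (a := m) (b := v)
      (fun s hs => by simpa using ((hasDerivAt_id s).const_sub v))
      (fun s hs => hd s (by rw [uIcc_of_le hmv.le] at hs; exact ⟨le_trans hum.le hs.1, hs.2⟩))
      intervalIntegrable_const (hintp m v hum.le hmv.le le_rfl)
    have eneg1 : (∫ s in u..m, (-1:ℝ) * f s) = -∫ s in u..m, f s := by
      rw [← intervalIntegral.integral_neg]
      apply integral_congr
      intro s _
      ring
    have eneg2 : (∫ s in m..v, (-1:ℝ) * f s) = -∫ s in m..v, f s := by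
      rw [← intervalIntegral.integral_neg]
      apply integral_congr
      intro s _
      ring
    rw [eneg1] at P1
    rw [eneg2] at P2
    -- split of ∫ f
    have hsplitf : (∫ t in u..v, f t) = (∫ t in u..m, f t) + ∫ t in m..v, f t :=
      (integral_add_adjacent_intervals
        ((hfc u m le_rfl hum.le hmv.le).intervalIntegrable)
        ((hfc m v hum.le hmv.le le_rfl).intervalIntegrable)).symm
    -- split of ∫ K φ
    have iKφ := mqe_iK u v huv (deriv f) hint
    have iKp1 : IntervalIntegrable (fun s => K s * deriv f s) volume u m := by
      apply iKφ.mono_set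
      rw [uIcc_of_le hum.le, uIcc_of_le huv.le]
      exact Icc_subset_Icc_right hmv.le
    have iKp2 : IntervalIntegrable (fun s => K s * deriv f s) volume m v := by
      apply iKφ.mono_set
      rw [uIcc_of_le hmv.le, uIcc_of_le huv.le]
      exact Icc_subset_Icc_left hum.le
    have hsplitK : (∫ s in u..v, K s * deriv f s)
        = (∫ s in u..m, K s * deriv f s) + ∫ s in m..v, K s * deriv f s :=
      (integral_add_adjacent_intervals iKp1 iKp2).symm
    have e1 : (∫ s in u..m, K s * deriv f s) = ∫ s in u..m, (u - s) * deriv f s := by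
      apply integral_congr
      intro s hs
      rw [uIcc_of_le hum.le] at hs
      simp only [hK]
      rw [if_pos (le_trans hs.2 (by rw [hm]))]
    have e2 : (∫ s in m..v, K s * deriv f s) = ∫ s in m..v, (v - s) * deriv f s := by
      apply integral_congr_ae'
      · filter_upwards with s hs
        simp only [hK]
        rw [if_neg (not_le.2 (lt_of_le_of_lt (le_of_eq hm.symm) hs.1))]
      · filter_upwards with s hs
        rw [Set.Ioc_eq_empty (by linarith)] at hs
        exact absurd hs (Set.notMem_empty s)
    rw [hsplitK, e1, e2, P1, P2, hsplitf]
    ring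
  rw [hrep]
  -- now bound |∫ K φ|
  have habs_eq : ∀ c d : ℝ, u ≤ c → c ≤ d → d ≤ v →
      ((∀ s ∈ Ioo c d, 0 ≤ deriv f s) ∨ (∀ s ∈ Ioo c d, deriv f s ≤ 0)) →
      |∫ s in c..d, K s * deriv f s| = |∫ s in c..d, K s * g s| := by
    intro c d hc hcd hd' hdich
    have hane : ∀ᵐ x : ℝ ∂volume, x ≠ c ∧ x ≠ d := by
      have hs2 : {x : ℝ | ¬ (x ≠ c ∧ x ≠ d)} ⊆ {c} ∪ {d} := by
        intro y hy
        simp only [mem_setOf_eq, not_and_or, not_not] at hy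
        rcases hy with rfl | rfl
        · exact Or.inl rfl
        · exact Or.inr rfl
      rw [ae_iff]
      exact measure_mono_null hs2
        (le_antisymm (le_trans (measure_union_le _ _)
          (by rw [Real.volume_singleton, Real.volume_singleton]; simp)) zero_le)
    rcases hdich with hnn | hnp
    · have heq : (∫ s in c..d, K s * deriv f s) = ∫ s in c..d, K s * g s := by
        apply intervalIntegral.integral_congr_ae
        filter_upwards [hane] with x hx hmem
        rw [uIoc_of_le hcd] at hmem
        have hxoo : x ∈ Ioo c d := ⟨lt_of_le_of_ne hmem.1.le (Ne.symm hx.1), lt_of_le_of_ne hmem.2 hx.2⟩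
        have : g x = deriv f x := by
          simp only [hgdef]
          exact abs_of_nonneg (hnn x hxoo)
        rw [this]
      rw [heq]
    · have heq : (∫ s in c..d, K s * deriv f s) = ∫ s in c..d, -(K s * g s) := by
        apply intervalIntegral.integral_congr_ae
        filter_upwards [hane] with x hx hmem
        rw [uIoc_of_le hcd] at hmem
        have hxoo : x ∈ Ioo c d := ⟨lt_of_le_of_ne hmem.1.le (Ne.symm hx.1), lt_of_le_of_ne hmem.2 hx.2⟩
        have : g x = -deriv f x := by
          simp only [hgdef]
          exact abs_of_nonpos (hnp x hxoo)
        rw [this]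
        ring
      rw [heq, intervalIntegral.integral_neg, abs_neg]
  by_cases hex : ∃ r ∈ Ioo u v, deriv f r = 0
  · obtain ⟨r, hrIoo, hφr⟩ := hex
    have hgr : g r = 0 := by simp [hgdef, hφr]
    have hrIcc : r ∈ Icc u v := ⟨hrIoo.1.le, hrIoo.2.le⟩
    have hdichL : (∀ s ∈ Ioo u r, 0 ≤ deriv f s) ∨ (∀ s ∈ Ioo u r, deriv f s ≤ 0) := by
      by_contra hcon
      push_neg at hcon
      obtain ⟨⟨s1, hs1, hlt1⟩, ⟨s2, hs2, hlt2⟩⟩ := hcon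
      have hmem : ∀ w : ℝ, w ∈ Ioo u r → w ∈ Icc u v :=
        fun w hw => ⟨hw.1.le, le_trans hw.2.le hrIoo.2.le⟩
      rcases lt_trichotomy s1 s2 with hlt | heq | hgt
      · obtain ⟨z, hzIoo, hz0⟩ := mqe_ivt f hlt
          (fun s hs => hd s ⟨le_trans hs1.1.le hs.1, le_trans hs.2 (le_trans hs2.2.le hrIoo.2.le)⟩)
          (mul_neg_of_neg_of_pos hlt1 hlt2)
        have hgz : g z = 0 := by simp [hgdef, hz0]
        have hzIcc : z ∈ Icc u v :=
          ⟨le_trans hs1.1.le hzIoo.1.le, le_trans hzIoo.2.le (le_trans hs2.2.le hrIoo.2.le)⟩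
        have hz2 : g s2 = 0 := mqe_zero_between g hconv hpos hzIcc hrIcc hgz hgr hzIoo.2.le hs2.2.le
        simp only [hgdef, abs_eq_zero] at hz2
        linarith
      · rw [heq] at hlt1; linarith
      · obtain ⟨z, hzIoo, hz0⟩ := mqe_ivt f hgt
          (fun s hs => hd s ⟨le_trans hs2.1.le hs.1, le_trans hs.2 (le_trans hs1.2.le hrIoo.2.le)⟩)
          (mul_neg_of_pos_of_neg hlt2 hlt1)
        have hgz : g z = 0 := by simp [hgdef, hz0]
        have hzIcc : z ∈ Icc u v :=
          ⟨le_trans hs2.1.le hzIoo.1.le, le_trans hzIoo.2.le (le_trans hs1.2.le hrIoo.2.le)⟩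
        have hz1 : g s1 = 0 := mqe_zero_between g hconv hpos hzIcc hrIcc hgz hgr hzIoo.2.le hs1.2.le
        simp only [hgdef, abs_eq_zero] at hz1
        linarith
    have hdichR : (∀ s ∈ Ioo r v, 0 ≤ deriv f s) ∨ (∀ s ∈ Ioo r v, deriv f s ≤ 0) := by
      by_contra hcon
      push_neg at hcon
      obtain ⟨⟨s1, hs1, hlt1⟩, ⟨s2, hs2, hlt2⟩⟩ := hcon
      rcases lt_trichotomy s1 s2 with hlt | heq | hgt
      · obtain ⟨z, hzIoo, hz0⟩ := mqe_ivt f hlt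
          (fun s hs => hd s ⟨le_trans hrIoo.1.le (le_trans hs1.1.le hs.1), le_trans hs.2 hs2.2.le⟩)
          (mul_neg_of_neg_of_pos hlt1 hlt2)
        have hgz : g z = 0 := by simp [hgdef, hz0]
        have hzIcc : z ∈ Icc u v :=
          ⟨le_trans hrIoo.1.le (le_trans hs1.1.le hzIoo.1.le), le_trans hzIoo.2.le hs2.2.le⟩
        have hz1 : g s1 = 0 := mqe_zero_between g hconv hpos hrIcc hzIcc hgr hgz hs1.1.le hzIoo.1.le
        simp only [hgdef, abs_eq_zero] at hz1
        linarith
      · rw [heq] at hlt1; linarith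
      · obtain ⟨z, hzIoo, hz0⟩ := mqe_ivt f hgt
          (fun s hs => hd s ⟨le_trans hrIoo.1.le (le_trans hs2.1.le hs.1), le_trans hs.2 hs1.2.le⟩)
          (mul_neg_of_pos_of_neg hlt2 hlt1)
        have hgz : g z = 0 := by simp [hgdef, hz0]
        have hzIcc : z ∈ Icc u v :=
          ⟨le_trans hrIoo.1.le (le_trans hs2.1.le hzIoo.1.le), le_trans hzIoo.2.le hs1.2.le⟩
        have hz2 : g s2 = 0 := mqe_zero_between g hconv hpos hrIcc hzIcc hgr hgz hs2.1.le hzIoo.1.le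
        simp only [hgdef, abs_eq_zero] at hz2
        linarith
    have iKφ := mqe_iK u v huv (deriv f) hint
    have iKL : IntervalIntegrable (fun s => K s * deriv f s) volume u r := by
      apply iKφ.mono_set
      rw [uIcc_of_le hrIoo.1.le, uIcc_of_le huv.le]
      exact Icc_subset_Icc_right hrIoo.2.le
    have iKR : IntervalIntegrable (fun s => K s * deriv f s) volume r v := by
      apply iKφ.mono_set
      rw [uIcc_of_le hrIoo.2.le, uIcc_of_le huv.le]
      exact Icc_subset_Icc_left hrIoo.1.le
    have hsplit : (∫ s in u..v, K s * deriv f s)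
        = (∫ s in u..r, K s * deriv f s) + ∫ s in r..v, K s * deriv f s :=
      (integral_add_adjacent_intervals iKL iKR).symm
    have hL := habs_eq u r le_rfl hrIoo.1.le hrIoo.2.le hdichL
    have hR := habs_eq r v hrIoo.1.le hrIoo.2.le le_rfl hdichR
    have hPL := mqe_piece_left u v r huv hrIoo g hconv hpos hgi hgr
    have hPR := mqe_piece_right u v r huv hrIoo g hconv hpos hgi hgr
    calc |∫ s in u..v, K s * deriv f s|
        ≤ |∫ s in u..r, K s * deriv f s| + |∫ s in r..v, K s * deriv f s| := by
          rw [hsplit]; exact abs_add_le _ _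
      _ ≤ (v-u)^2 * g u / 16 + (v-u)^2 * g v / 16 := by
          rw [hL, hR]; exact add_le_add hPL hPR
      _ = (v-u)^2 * (|deriv f u| + |deriv f v|) / 16 := by
          simp only [hgdef]; ring
  · push_neg at hex
    have hdich : (∀ s ∈ Ioo u v, 0 ≤ deriv f s) ∨ (∀ s ∈ Ioo u v, deriv f s ≤ 0) := by
      by_contra hcon
      push_neg at hcon
      obtain ⟨⟨s1, hs1, hlt1⟩, ⟨s2, hs2, hlt2⟩⟩ := hcon
      rcases lt_trichotomy s1 s2 with hlt | heq | hgt
      · obtain ⟨z, hzIoo, hz0⟩ := mqe_ivt f hlt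
          (fun s hs => hd s ⟨le_trans hs1.1.le hs.1, le_trans hs.2 hs2.2.le⟩)
          (mul_neg_of_neg_of_pos hlt1 hlt2)
        exact hex z ⟨lt_of_lt_of_le hs1.1 hzIoo.1.le, lt_of_le_of_lt hzIoo.2.le hs2.2⟩ hz0
      · rw [heq] at hlt1; linarith
      · obtain ⟨z, hzIoo, hz0⟩ := mqe_ivt f hgt
          (fun s hs => hd s ⟨le_trans hs2.1.le hs.1, le_trans hs.2 hs1.2.le⟩)
          (mul_neg_of_pos_of_neg hlt2 hlt1)
        exact hex z ⟨lt_of_lt_of_le hs2.1 hzIoo.1.le, lt_of_le_of_lt hzIoo.2.le hs1.2⟩ hz0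
    rw [habs_eq u v le_rfl huv.le le_rfl hdich]
    have H1 := mqe_main_upper u v huv g hconv hpos hgi
    have H2 := mqe_main_lower u v huv g hconv hpos hgi
    rw [abs_le]
    constructor
    · have : g u = |deriv f u| := rfl
      have h2 : g v = |deriv f v| := rfl
      rw [← this, ← h2]
      linarith [H2]
    · have : g u = |deriv f u| := rfl
      have h2 : g v = |deriv f v| := rfl
      rw [← this, ← h2]
      linarith [H1]

theorem midpoint_quadrature_error
    (f : ℝ → ℝ) (a b p : ℝ) (I : Set ℝ) (hI : IsOpen I) (hIcc : Icc a b ⊆ I)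
    (hab : a < b) (hp : 1 < p)
    (hf : DifferentiableOn ℝ f I)
    (hint : IntervalIntegrable (deriv f) volume a b)
    (hconv : ConvexOn ℝ (Icc a b) (fun x => |deriv f x|))
    (n : ℕ) (x : ℕ → ℝ) (hx0 : x 0 = a) (hxn : x n = b)
    (hmono : ∀ i < n, x i < x (i + 1)) :
    |(∫ t in a..b, f t) -
        ∑ i ∈ Finset.range n, f ((x i + x (i + 1)) / 2) * (x (i + 1) - x i)| ≤
      (1 / 2 ^ ((2 * p + 1) / p)) *
        ∑ i ∈ Finset.range n,
          (x (i + 1) - x i) ^ 2 / 2 * (|deriv f (x i)| + |deriv f (x (i + 1))|) ∧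
    |(∫ t in a..b, f t) -
        ∑ i ∈ Finset.range n, f ((x i + x (i + 1)) / 2) * (x (i + 1) - x i)| ≤
      (1 / 8) *
        ∑ i ∈ Finset.range n,
          (x (i + 1) - x i) ^ 2 * (|deriv f (x i)| + |deriv f (x (i + 1))|) := by
  have hxmono : ∀ i j, i ≤ j → j ≤ n → x i ≤ x j := by
    intro i j hij hjn
    induction j with
    | zero =>
        have : i = 0 := Nat.le_zero.1 hij
        rw [this]
    | succ k ih =>
        rcases Nat.lt_or_ge i (k+1) with h | h
        · exact le_trans (ih (Nat.lt_succ_iff.1 h) (le_trans (Nat.le_succ k) hjn))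
            (le_of_lt (hmono k (by omega)))
        · have : i = k+1 := le_antisymm hij h
          rw [this]
  have hmem : ∀ i, i ≤ n → x i ∈ Icc a b := fun i hi =>
    ⟨hx0 ▸ hxmono 0 i (Nat.zero_le _) hi, hxn ▸ hxmono i n hi le_rfl⟩
  have hfc : ContinuousOn f (Icc a b) := fun s hs =>
    ((hf.differentiableAt (hI.mem_nhds (hIcc hs))).continuousAt).continuousWithinAt
  have hfi : ∀ i < n, IntervalIntegrable f volume (x i) (x (i+1)) := by
    intro i hi
    apply ContinuousOn.intervalIntegrable
    apply hfc.mono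
    rw [uIcc_of_le (hmono i hi).le]
    exact Icc_subset_Icc (hmem i hi.le).1 (hmem (i+1) hi).2
  have hsum : (∑ i ∈ Finset.range n, ∫ t in x i..x (i+1), f t) = ∫ t in a..b, f t := by
    rw [intervalIntegral.sum_integral_adjacent_intervals hfi, hx0, hxn]
  have hper : ∀ i < n, |(∫ t in x i..x (i+1), f t)
        - f ((x i + x (i+1))/2) * (x (i+1) - x i)|
      ≤ (x (i+1) - x i)^2 * (|deriv f (x i)| + |deriv f (x (i+1))|) / 16 := by
    intro i hi
    have hsubi : Icc (x i) (x (i+1)) ⊆ Icc a b :=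
      Icc_subset_Icc (hmem i hi.le).1 (hmem (i+1) hi).2
    apply mqe_interval f I hI (x i) (x (i+1)) (hmono i hi) (hsubi.trans hIcc) hf
    · apply hint.mono_set
      rw [uIcc_of_le (hmono i hi).le, uIcc_of_le hab.le]
      exact hsubi
    · exact hconv.subset hsubi (convex_Icc _ _)
  have hdiff : (∫ t in a..b, f t)
      - (∑ i ∈ Finset.range n, f ((x i + x (i+1))/2) * (x (i+1) - x i))
      = ∑ i ∈ Finset.range n, ((∫ t in x i..x (i+1), f t)
        - f ((x i + x (i+1))/2) * (x (i+1) - x i)) := by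
    rw [Finset.sum_sub_distrib, hsum]
  have htot : |(∫ t in a..b, f t)
      - ∑ i ∈ Finset.range n, f ((x i + x (i+1))/2) * (x (i+1) - x i)|
      ≤ ∑ i ∈ Finset.range n,
        (x (i+1) - x i)^2 * (|deriv f (x i)| + |deriv f (x (i+1))|) / 16 := by
    rw [hdiff]
    exact le_trans (Finset.abs_sum_le_sum_abs _ _)
      (Finset.sum_le_sum (fun i hi => hper i (Finset.mem_range.1 hi)))
  have hQnn : ∀ i : ℕ, (0:ℝ) ≤ (x (i+1) - x i)^2 * (|deriv f (x i)| + |deriv f (x (i+1))|) :=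
    fun i => mul_nonneg (sq_nonneg _) (add_nonneg (abs_nonneg _) (abs_nonneg _))
  constructor
  · refine le_trans htot ?_
    rw [Finset.mul_sum]
    apply Finset.sum_le_sum
    intro i _
    have hppos : (0:ℝ) < p := by linarith
    have hexp : (2*p+1)/p ≤ 3 := by
      rw [div_le_iff₀ hppos]
      linarith
    have hcle : (2:ℝ)^((2*p+1)/p) ≤ 8 := by
      calc (2:ℝ)^((2*p+1)/p) ≤ (2:ℝ)^(3:ℝ) :=
            Real.rpow_le_rpow_of_exponent_le (by norm_num) hexp
        _ = 8 := by
            rw [show (3:ℝ) = ((3:ℕ):ℝ) by norm_num, Real.rpow_natCast]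
            norm_num
    have hcpos : (0:ℝ) < (2:ℝ)^((2*p+1)/p) := Real.rpow_pos_of_pos (by norm_num) _
    have hfrac : (1:ℝ)/16 ≤ (1 / 2^((2*p+1)/p)) * (1/2) := by
      rw [show (1 / (2:ℝ)^((2*p+1)/p)) * (1/2) = 1/(2^((2*p+1)/p)*2) by ring]
      apply one_div_le_one_div_of_le
      · positivity
      · linarith
    have := mul_le_mul_of_nonneg_right hfrac (hQnn i)
    calc (x (i+1) - x i)^2 * (|deriv f (x i)| + |deriv f (x (i+1))|) / 16
        = 1/16 * ((x (i+1) - x i)^2 * (|deriv f (x i)| + |deriv f (x (i+1))|)) := by ring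
      _ ≤ (1 / 2^((2*p+1)/p)) * (1/2)
            * ((x (i+1) - x i)^2 * (|deriv f (x i)| + |deriv f (x (i+1))|)) := this
      _ = 1 / 2^((2*p+1)/p)
            * ((x (i+1) - x i)^2/2 * (|deriv f (x i)| + |deriv f (x (i+1))|)) := by ring
  · refine le_trans htot ?_
    rw [Finset.mul_sum]
    apply Finset.sum_le_sum
    intro i _
    have := mul_le_mul_of_nonneg_right (show (1:ℝ)/16 ≤ 1/8 by norm_num) (hQnn i)
    calc (x (i+1) - x i)^2 * (|deriv f (x i)| + |deriv f (x (i+1))|) / 16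
        = 1/16 * ((x (i+1) - x i)^2 * (|deriv f (x i)| + |deriv f (x (i+1))|)) := by ring
      _ ≤ 1/8 * ((x (i+1) - x i)^2 * (|deriv f (x i)| + |deriv f (x (i+1))|)) := this
end

section
/- If |f'| is convex on [a,b] (a < b), f differentiable with f' integrable on [a,b], then |f((a+b)/2) - (1/(b-a))∫_a^b f(x)dx| ≤ ((b-a)/4)[ (|f'(a)| + |f'(b)| + 2|f'((a+b)/2)|)·(1/6) + (1/2)|f'((a+b)/2)| ]. -/
open Set MeasureTheory intervalIntegral

private lemma poly_int_left (a c A M : ℝ) :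
    (∫ t in a..c, (t - a) * ((c - t) * A + (t - a) * M))
      = (c - a) ^ 3 * (A / 6 + M / 3) := by
  have h : ∀ t ∈ uIcc a c,
      HasDerivAt (fun t => A * ((c - a) * (t - a) ^ 2 / 2 - (t - a) ^ 3 / 3)
          + M * (t - a) ^ 3 / 3)
        ((t - a) * ((c - t) * A + (t - a) * M)) t := by
    intro t _
    have h1 : HasDerivAt (fun t : ℝ => t - a) 1 t := (hasDerivAt_id t).sub_const a
    have h2 : HasDerivAt (fun t : ℝ => (t - a) ^ 2) (2 * (t - a)) t := by
      simpa using h1.fun_pow 2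
    have h3 : HasDerivAt (fun t : ℝ => (t - a) ^ 3) (3 * (t - a) ^ 2) t := by
      simpa using h1.fun_pow 3
    have := ((((h2.const_mul (c - a)).div_const 2).sub (h3.div_const 3)).const_mul A).add
      ((h3.const_mul M).div_const 3)
    refine this.congr_deriv ?_
    ring
  rw [intervalIntegral.integral_eq_sub_of_hasDerivAt h
    (((continuous_id.sub continuous_const).mul (((continuous_const.sub continuous_id).mul continuous_const).add ((continuous_id.sub continuous_const).mul continuous_const))).intervalIntegrable a c)]
  ring

private lemma poly_int_right (c b B M : ℝ) :
    (∫ t in c..b, (b - t) * ((t - c) * B + (b - t) * M))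
      = (b - c) ^ 3 * (B / 6 + M / 3) := by
  have h : ∀ t ∈ uIcc c b,
      HasDerivAt (fun t => B * ((b - c) * (t - c) ^ 2 / 2 - (t - c) ^ 3 / 3)
          + M * (-(b - t) ^ 3 / 3))
        ((b - t) * ((t - c) * B + (b - t) * M)) t := by
    intro t _
    have h1 : HasDerivAt (fun t : ℝ => t - c) 1 t := (hasDerivAt_id t).sub_const c
    have h1' : HasDerivAt (fun t : ℝ => b - t) (-1) t := by
      simpa using (hasDerivAt_id t).const_sub b
    have h2 : HasDerivAt (fun t : ℝ => (t - c) ^ 2) (2 * (t - c)) t := by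
      simpa using h1.fun_pow 2
    have h3 : HasDerivAt (fun t : ℝ => (t - c) ^ 3) (3 * (t - c) ^ 2) t := by
      simpa using h1.fun_pow 3
    have h4 : HasDerivAt (fun t : ℝ => (b - t) ^ 3) (3 * (b - t) ^ 2 * (-1)) t := h1'.pow 3
    have := ((((h2.const_mul (b - c)).div_const 2).sub (h3.div_const 3)).const_mul B).add
      (((h4.neg).div_const 3).const_mul M)
    refine this.congr_deriv ?_
    ring
  rw [intervalIntegral.integral_eq_sub_of_hasDerivAt h
    (((continuous_const.sub continuous_id).mul (((continuous_id.sub continuous_const).mul continuous_const).add ((continuous_const.sub continuous_id).mul continuous_const))).intervalIntegrable c b)]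
  ring

theorem midpoint_ineq_convex_deriv
    (f : ℝ → ℝ) (a b : ℝ) (I : Set ℝ) (hI : IsOpen I) (hIcc : Icc a b ⊆ I)
    (hab : a < b)
    (hf : DifferentiableOn ℝ f I)
    (hint : IntervalIntegrable (deriv f) volume a b)
    (hconv : ConvexOn ℝ (Icc a b) (fun x => |deriv f x|)) :
    |f ((a + b) / 2) - (1 / (b - a)) * ∫ x in a..b, f x| ≤
      ((b - a) / 4) *
        ((|deriv f a| + |deriv f b| + 2 * |deriv f ((a + b) / 2)|) * (1 / 6) +
          (1 / 2) * |deriv f ((a + b) / 2)|) := by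
  set c : ℝ := (a + b) / 2 with hc
  have hac : a < c := by rw [hc]; linarith
  have hcb : c < b := by rw [hc]; linarith
  have hba : (0:ℝ) < b - a := by linarith
  set A := |deriv f a| with hA
  set B := |deriv f b| with hB
  set M := |deriv f c| with hM
  have hM0 : 0 ≤ M := abs_nonneg _
  -- differentiability / continuity facts
  have hd : ∀ t ∈ Icc a b, HasDerivAt f (deriv f t) t := fun t ht =>
    ((hf t (hIcc ht)).differentiableAt (hI.mem_nhds (hIcc ht))).hasDerivAt
  have hcont : ContinuousOn f (Icc a b) := fun t ht =>
    (hd t ht).continuousAt.continuousWithinAt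
  have hsub1 : uIcc a c ⊆ Icc a b := by
    rw [uIcc_of_le hac.le]; exact Icc_subset_Icc le_rfl hcb.le
  have hsub2 : uIcc c b ⊆ Icc a b := by
    rw [uIcc_of_le hcb.le]; exact Icc_subset_Icc hac.le le_rfl
  have huab : Icc a b = uIcc a b := (uIcc_of_le hab.le).symm
  have hfint1 : IntervalIntegrable f volume a c :=
    (hcont.mono hsub1).intervalIntegrable
  have hfint2 : IntervalIntegrable f volume c b :=
    (hcont.mono hsub2).intervalIntegrable
  have hint1 : IntervalIntegrable (deriv f) volume a c :=
    hint.mono_set (huab ▸ hsub1)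
  have hint2 : IntervalIntegrable (deriv f) volume c b :=
    hint.mono_set (huab ▸ hsub2)
  -- integration by parts
  have ibp1 : ∫ t in a..c, (t - a) * deriv f t = (c - a) * f c - ∫ t in a..c, f t := by
    have := integral_mul_deriv_eq_deriv_mul
      (u := fun t : ℝ => t - a) (v := f) (u' := fun _ => (1:ℝ)) (v' := deriv f)
      (fun x _ => (hasDerivAt_id x).sub_const a)
      (fun x hx => hd x (hsub1 hx))
      intervalIntegrable_const hint1
    simp only [one_mul, sub_self, zero_mul, sub_zero] at this
    linarith [this]
  have ibp2 : ∫ t in c..b, (t - b) * deriv f t = (b - c) * f c - ∫ t in c..b, f t := by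
    have := integral_mul_deriv_eq_deriv_mul
      (u := fun t : ℝ => t - b) (v := f) (u' := fun _ => (1:ℝ)) (v' := deriv f)
      (fun x _ => (hasDerivAt_id x).sub_const b)
      (fun x hx => hd x (hsub2 hx))
      intervalIntegrable_const hint2
    simp only [one_mul, sub_self, zero_mul, sub_zero, zero_sub] at this
    linarith [this]
  have hsplit : (∫ x in a..b, f x) = (∫ x in a..c, f x) + ∫ x in c..b, f x :=
    (intervalIntegral.integral_add_adjacent_intervals hfint1 hfint2).symm
  have key : f c - (1 / (b - a)) * ∫ x in a..b, f x
      = (1 / (b - a)) * ((∫ t in a..c, (t - a) * deriv f t)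
          + ∫ t in c..b, (t - b) * deriv f t) := by
    rw [ibp1, ibp2, hsplit]
    field_simp
    ring
  -- convexity pointwise bounds
  have hmemc : c ∈ Icc a b := ⟨hac.le, hcb.le⟩
  have pc1 : ∀ t ∈ Icc a c, |deriv f t| ≤ ((c - t) * A + (t - a) * M) / (c - a) := by
    intro t ht
    have hca : (0:ℝ) < c - a := by linarith
    have h1 : (0:ℝ) ≤ (c - t) / (c - a) := by
      apply div_nonneg <;> linarith [ht.2]
    have h2 : (0:ℝ) ≤ (t - a) / (c - a) := by
      apply div_nonneg <;> linarith [ht.1]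
    have h3 : (c - t) / (c - a) + (t - a) / (c - a) = 1 := by field_simp; ring
    have := hconv.2 (x := a) ⟨le_rfl, hab.le⟩ (y := c) hmemc h1 h2 h3
    simp only [smul_eq_mul] at this
    have ht' : (c - t) / (c - a) * a + (t - a) / (c - a) * c = t := by
      field_simp; ring
    rw [ht'] at this
    calc |deriv f t| ≤ (c - t) / (c - a) * A + (t - a) / (c - a) * M := this
      _ = ((c - t) * A + (t - a) * M) / (c - a) := by ring
  have pc2 : ∀ t ∈ Icc c b, |deriv f t| ≤ ((t - c) * B + (b - t) * M) / (b - c) := by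
    intro t ht
    have hbc : (0:ℝ) < b - c := by linarith
    have h1 : (0:ℝ) ≤ (b - t) / (b - c) := by
      apply div_nonneg <;> linarith [ht.2]
    have h2 : (0:ℝ) ≤ (t - c) / (b - c) := by
      apply div_nonneg <;> linarith [ht.1]
    have h3 : (b - t) / (b - c) + (t - c) / (b - c) = 1 := by field_simp; ring
    have := hconv.2 (x := c) hmemc (y := b) ⟨hab.le, le_rfl⟩ h1 h2 h3
    simp only [smul_eq_mul] at this
    have ht' : (b - t) / (b - c) * c + (t - c) / (b - c) * b = t := by
      field_simp; ring
    rw [ht'] at this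
    calc |deriv f t| ≤ (b - t) / (b - c) * M + (t - c) / (b - c) * B := this
      _ = ((t - c) * B + (b - t) * M) / (b - c) := by ring
  -- bound the two integrals
  have intg1 : IntervalIntegrable (fun t => |(t - a) * deriv f t|) volume a c :=
    (hint1.continuousOn_mul ((continuous_id.sub continuous_const).continuousOn)).abs
  have intg2 : IntervalIntegrable (fun t => |(t - b) * deriv f t|) volume c b :=
    (hint2.continuousOn_mul ((continuous_id.sub continuous_const).continuousOn)).abs
  have bound1 : |∫ t in a..c, (t - a) * deriv f t| ≤ (c - a) ^ 2 * (A / 6 + M / 3) := by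
    have hca : (0:ℝ) < c - a := by linarith
    calc |∫ t in a..c, (t - a) * deriv f t|
        ≤ ∫ t in a..c, |(t - a) * deriv f t| :=
          intervalIntegral.abs_integral_le_integral_abs hac.le
      _ ≤ ∫ t in a..c, (1 / (c - a)) * ((t - a) * ((c - t) * A + (t - a) * M)) := by
          apply intervalIntegral.integral_mono_on hac.le intg1
            ((continuous_const.mul ((continuous_id.sub continuous_const).mul (((continuous_const.sub continuous_id).mul continuous_const).add ((continuous_id.sub continuous_const).mul continuous_const)))).intervalIntegrable a c)
          intro t ht
          have h0 : (0:ℝ) ≤ t - a := by linarith [ht.1]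
          calc |(t - a) * deriv f t| = (t - a) * |deriv f t| := by
                rw [abs_mul, abs_of_nonneg h0]
            _ ≤ (t - a) * (((c - t) * A + (t - a) * M) / (c - a)) :=
                mul_le_mul_of_nonneg_left (pc1 t ht) h0
            _ = (1 / (c - a)) * ((t - a) * ((c - t) * A + (t - a) * M)) := by ring
      _ = (1 / (c - a)) * ∫ t in a..c, (t - a) * ((c - t) * A + (t - a) * M) :=
          intervalIntegral.integral_const_mul _ _
      _ = (c - a) ^ 2 * (A / 6 + M / 3) := by
          rw [poly_int_left]; field_simp
  have bound2 : |∫ t in c..b, (t - b) * deriv f t| ≤ (b - c) ^ 2 * (B / 6 + M / 3) := by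
    have hbc : (0:ℝ) < b - c := by linarith
    calc |∫ t in c..b, (t - b) * deriv f t|
        ≤ ∫ t in c..b, |(t - b) * deriv f t| :=
          intervalIntegral.abs_integral_le_integral_abs hcb.le
      _ ≤ ∫ t in c..b, (1 / (b - c)) * ((b - t) * ((t - c) * B + (b - t) * M)) := by
          apply intervalIntegral.integral_mono_on hcb.le intg2
            ((continuous_const.mul ((continuous_const.sub continuous_id).mul (((continuous_id.sub continuous_const).mul continuous_const).add ((continuous_const.sub continuous_id).mul continuous_const)))).intervalIntegrable c b)
          intro t ht
          have h0 : (0:ℝ) ≤ b - t := by linarith [ht.2]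
          calc |(t - b) * deriv f t| = (b - t) * |deriv f t| := by
                rw [abs_mul, abs_sub_comm, abs_of_nonneg h0]
            _ ≤ (b - t) * (((t - c) * B + (b - t) * M) / (b - c)) :=
                mul_le_mul_of_nonneg_left (pc2 t ht) h0
            _ = (1 / (b - c)) * ((b - t) * ((t - c) * B + (b - t) * M)) := by ring
      _ = (1 / (b - c)) * ∫ t in c..b, (b - t) * ((t - c) * B + (b - t) * M) :=
          intervalIntegral.integral_const_mul _ _
      _ = (b - c) ^ 2 * (B / 6 + M / 3) := by
          rw [poly_int_right]; field_simp
  -- assemble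
  rw [key]
  have habs : |(1 / (b - a)) * ((∫ t in a..c, (t - a) * deriv f t)
      + ∫ t in c..b, (t - b) * deriv f t)|
      ≤ (1 / (b - a)) * ((c - a) ^ 2 * (A / 6 + M / 3) + (b - c) ^ 2 * (B / 6 + M / 3)) := by
    rw [abs_mul, abs_of_pos (by positivity : (0:ℝ) < 1 / (b - a))]
    exact mul_le_mul_of_nonneg_left
      ((abs_add_le _ _).trans (add_le_add bound1 bound2)) (by positivity)
  refine habs.trans ?_
  have h1 : c - a = (b - a) / 2 := by rw [hc]; ring
  have h2 : b - c = (b - a) / 2 := by rw [hc]; ring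
  rw [h1, h2]
  rw [div_mul_eq_mul_div, one_mul, div_le_iff₀ hba]
  ring_nf
  nlinarith [hM0, sq_nonneg (b - a), mul_nonneg hM0 (sq_nonneg (b - a))]
end
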